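/- arXiv:2103.03639 — 4 statements merged into one kernel-verified Lean document; each statement's English description precedes it below -/
import Mathlib

section
/- Let h(x) = c_0 + c_1 x + ... + c_n x^n be a real polynomial of degree at most n with nonnegative coefficients c_0, ..., c_n. Then the polynomial 𝒟_n(h) has only real roots. -/
open Polynomial PowerSeries Finset

noncomputable section

/-- A real polynomial is *real-rooted* if it is the zero polynomial or
all of its (complex) roots are real. -/
def RealRooted (p : Polynomial ℝ) : Prop :=
  p = 0 ∨ ∀ z ∈ (p.map (algebraMap ℝ ℂ)).roots, z.im = 0

/-- The number of real roots of `p`, counted with multiplicity, that are `≥ t`. -/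
def rootsGe (p : Polynomial ℝ) (t : ℝ) : ℕ :=
  (p.roots.filter fun x => t ≤ x).card

/-- `Interlaces p q`: both `p` and `q` are real-rooted and, writing the roots of `p`
as α₁ ≥ α₂ ≥ ⋯ and those of `q` as β₁ ≥ β₂ ≥ ⋯, one has ⋯ ≤ α₂ ≤ β₂ ≤ α₁ ≤ β₁;
equivalently (and this is the formulation used here), for every `t` the number of
roots of `q` that are `≥ t` exceeds the corresponding number for `p` by `0` or `1`.
By convention the zero polynomial interlaces and is interlaced by every
real-rooted polynomial. -/
def Interlaces (p q : Polynomial ℝ) : Prop :=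
  RealRooted p ∧ RealRooted q ∧
    (p = 0 ∨ q = 0 ∨ ∀ t : ℝ, rootsGe q t = rootsGe p t ∨ rootsGe q t = rootsGe p t + 1)

/-- `(a, b)` is the symmetric decomposition of `p` with respect to `n`:
`p = a + x·b`, `a` has degree at most `n` with `xⁿ·a(1/x) = a(x)`, and `b` has
degree at most `n − 1` with `x^(n−1)·b(1/x) = b(x)`. -/
def IsSymmDecomp (n : ℕ) (p a b : Polynomial ℝ) : Prop :=
  p = a + Polynomial.X * b ∧ a.natDegree ≤ n ∧ b.natDegree ≤ n - 1 ∧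
    (∀ i ≤ n, a.coeff (n - i) = a.coeff i) ∧
    (∀ i ≤ n - 1, b.coeff (n - 1 - i) = b.coeff i)

/-- `p` has a nonnegative, real-rooted symmetric decomposition with respect to `n`. -/
def HasNonnegRealRootedSymmDecomp (n : ℕ) (p : Polynomial ℝ) : Prop :=
  ∃ a b : Polynomial ℝ, IsSymmDecomp n p a b ∧
    (∀ i, 0 ≤ a.coeff i) ∧ (∀ i, 0 ≤ b.coeff i) ∧ RealRooted a ∧ RealRooted b

/-- `p` has a nonnegative, real-rooted and interlacing symmetric decomposition
with respect to `n` (interlacing: `a` is interlaced by `b`). -/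
def HasInterlacingSymmDecomp (n : ℕ) (p : Polynomial ℝ) : Prop :=
  ∃ a b : Polynomial ℝ, IsSymmDecomp n p a b ∧
    (∀ i, 0 ≤ a.coeff i) ∧ (∀ i, 0 ≤ b.coeff i) ∧ RealRooted a ∧ RealRooted b ∧
    Interlaces b a

/-- vectors with argument (as a chosen real) in `[a,b]`. -/
def InCone (a b : ℝ) (w : ℂ) : Prop :=
  ∃ r : ℝ, 0 < r ∧ ∃ θ : ℝ, a ≤ θ ∧ θ ≤ b ∧ w = (r : ℂ) * Complex.exp (θ * Complex.I)

lemma InCone.ne_zero {a b : ℝ} {w : ℂ} (h : InCone a b w) : w ≠ 0 := by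
  obtain ⟨r, hr, θ, _, _, rfl⟩ := h
  simp [Complex.exp_ne_zero, hr.ne']

lemma InCone.mono {a b a' b' : ℝ} {w : ℂ} (h : InCone a b w) (ha : a' ≤ a) (hb : b ≤ b') :
    InCone a' b' w := by
  obtain ⟨r, hr, θ, h1, h2, rfl⟩ := h
  exact ⟨r, hr, θ, ha.trans h1, h2.trans hb, rfl⟩

lemma re_mul_exp (r θ x : ℝ) :
    ((r : ℂ) * Complex.exp (θ * Complex.I) * Complex.exp (-(x) * Complex.I)).re
      = r * Real.cos (θ - x) := by
  rw [mul_assoc, ← Complex.exp_add]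
  have : (θ : ℂ) * Complex.I + -(x : ℂ) * Complex.I = ((θ - x : ℝ)) * Complex.I := by
    push_cast; ring
  rw [this, Complex.re_ofReal_mul, Complex.exp_ofReal_mul_I_re]

lemma im_mul_exp (r θ x : ℝ) :
    ((r : ℂ) * Complex.exp (θ * Complex.I) * Complex.exp (-(x) * Complex.I)).im
      = r * Real.sin (θ - x) := by
  rw [mul_assoc, ← Complex.exp_add]
  have : (θ : ℂ) * Complex.I + -(x : ℂ) * Complex.I = ((θ - x : ℝ)) * Complex.I := by
    push_cast; ring
  rw [this, Complex.im_ofReal_mul, Complex.exp_ofReal_mul_I_im]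

/-- key binary cone-addition lemma -/
lemma InCone.add {a b : ℝ} (hab : b - a < Real.pi) {u w : ℂ}
    (hu : InCone a b u) (hw : InCone a b w) : InCone a b (u + w) := by
  obtain ⟨r, hr, θ, haθ, hθb, rfl⟩ := hu
  obtain ⟨s, hs, η, haη, hηb, rfl⟩ := hw
  have hba : a ≤ b := haθ.trans hθb
  set c : ℝ := (a + b) / 2 with hc
  set u := (r : ℂ) * Complex.exp (θ * Complex.I)
  set w := (s : ℂ) * Complex.exp (η * Complex.I)
  set q := (u + w) * Complex.exp (-(c) * Complex.I) with hqdef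
  have hqre : 0 < q.re := by
    have h1 : q.re = r * Real.cos (θ - c) + s * Real.cos (η - c) := by
      rw [hqdef, add_mul, Complex.add_re, re_mul_exp, re_mul_exp]
    rw [h1]
    have c1 : 0 < Real.cos (θ - c) := by
      apply Real.cos_pos_of_mem_Ioo
      constructor <;> [skip; skip] <;> · simp only [hc]; cases' le_or_gt 0 (θ - (a+b)/2) with h h <;> nlinarith [Real.pi_pos]
    have c2 : 0 < Real.cos (η - c) := by
      apply Real.cos_pos_of_mem_Ioo
      constructor <;> [skip; skip] <;> · simp only [hc]; cases' le_or_gt 0 (η - (a+b)/2) with h h <;> nlinarith [Real.pi_pos]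
    positivity
  have hq0 : q ≠ 0 := fun h => by simp [h] at hqre
  have harg : |q.arg| < Real.pi / 2 := Complex.abs_arg_lt_pi_div_two_iff.2 (Or.inl hqre)
  have hrepr : u + w = (‖q‖ : ℂ) * Complex.exp (((c + q.arg : ℝ)) * Complex.I) := by
    have h2 : (u + w) = q * Complex.exp ((c) * Complex.I) := by
      rw [hqdef, mul_assoc, ← Complex.exp_add]
      have : (-(c) : ℂ) * Complex.I + (c : ℂ) * Complex.I = 0 := by ring
      rw [this, Complex.exp_zero, mul_one]
    rw [h2]
    conv_lhs => rw [← Complex.norm_mul_exp_arg_mul_I q]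
    rw [mul_assoc, ← Complex.exp_add]
    congr 1
    push_cast
    ring
  have habs : (0:ℝ) < ‖q‖ := norm_pos_iff.mpr hq0
  -- bounds on c + arg q
  have imlow : 0 ≤ ((u + w) * Complex.exp (-(a) * Complex.I)).im := by
    rw [add_mul, Complex.add_im, im_mul_exp, im_mul_exp]
    have s1 : 0 ≤ Real.sin (θ - a) := Real.sin_nonneg_of_nonneg_of_le_pi (by linarith) (by linarith)
    have s2 : 0 ≤ Real.sin (η - a) := Real.sin_nonneg_of_nonneg_of_le_pi (by linarith) (by linarith)
    positivity
  have imhigh : ((u + w) * Complex.exp (-(b) * Complex.I)).im ≤ 0 := by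
    rw [add_mul, Complex.add_im, im_mul_exp, im_mul_exp]
    have s1 : Real.sin (θ - b) ≤ 0 := Real.sin_nonpos_of_nonpos_of_neg_pi_le (by linarith) (by linarith)
    have s2 : Real.sin (η - b) ≤ 0 := Real.sin_nonpos_of_nonpos_of_neg_pi_le (by linarith) (by linarith)
    nlinarith
  have hlow : a ≤ c + q.arg := by
    by_contra hcon
    push_neg at hcon
    have him : ((u + w) * Complex.exp (-(a) * Complex.I)).im
        = ‖q‖ * Real.sin ((c + q.arg) - a) := by
      rw [hrepr, im_mul_exp]
      
    have : Real.sin ((c + q.arg) - a) < 0 := by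
      apply Real.sin_neg_of_neg_of_neg_pi_lt (by linarith)
      have : -(Real.pi/2) < q.arg := (abs_lt.1 harg).1
      simp only [hc] at *
      linarith
    nlinarith [imlow, him]
  have hhigh : c + q.arg ≤ b := by
    by_contra hcon
    push_neg at hcon
    have him : ((u + w) * Complex.exp (-(b) * Complex.I)).im
        = ‖q‖ * Real.sin ((c + q.arg) - b) := by
      rw [hrepr, im_mul_exp]
    have : 0 < Real.sin ((c + q.arg) - b) := by
      apply Real.sin_pos_of_pos_of_lt_pi (by linarith)
      have : q.arg < Real.pi/2 := (abs_lt.1 harg).2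
      simp only [hc] at *
      linarith [Real.pi_pos]
    nlinarith [imhigh, him]
  exact ⟨‖q‖, habs, c + q.arg, hlow, hhigh, hrepr⟩

lemma InCone.sum {a b : ℝ} (hab : b - a < Real.pi) (s : Finset ℕ) (hs : s.Nonempty)
    (f : ℕ → ℂ) (h : ∀ i ∈ s, InCone a b (f i)) : InCone a b (∑ i ∈ s, f i) := by
  induction s using Finset.cons_induction with
  | empty => exact absurd hs (by simp)
  | cons i t hit ih =>
    rw [Finset.sum_cons]
    rcases t.eq_empty_or_nonempty with rfl | ht
    · simpa using h i (Finset.mem_cons_self i _)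
    · exact (h i (Finset.mem_cons_self i _)).add hab
        (ih ht fun j hj => h j (Finset.mem_cons_of_mem hj))

/-- uniqueness of polar representation with angles within `2π`. -/
lemma polar_unique {r s θ η : ℝ} (hr : 0 < r) (hs : 0 < s)
    (hd : |θ - η| < 2 * Real.pi)
    (h : (r : ℂ) * Complex.exp (θ * Complex.I) = (s : ℂ) * Complex.exp (η * Complex.I)) :
    θ = η := by
  have habs : r = s := by
    have := congrArg (‖·‖) h
    simpa [Complex.norm_exp, abs_of_pos hr, abs_of_pos hs] using this
  subst habs
  have hexp : Complex.exp (θ * Complex.I) = Complex.exp (η * Complex.I) := by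
    have hr' : (r : ℂ) ≠ 0 := by exact_mod_cast hr.ne'
    exact mul_left_cancel₀ hr' h
  rw [Complex.exp_eq_exp_iff_exists_int] at hexp
  obtain ⟨k, hk⟩ := hexp
  have : (θ : ℂ) * Complex.I - (η : ℂ) * Complex.I = (k : ℂ) * (2 * Real.pi * Complex.I) := by
    rw [hk]; ring
  have h2 : ((θ - η : ℝ) : ℂ) * Complex.I = (((k : ℝ) * (2 * Real.pi) : ℝ) : ℂ) * Complex.I := by
    push_cast
    push_cast at this
    linear_combination this
  have h4 := mul_right_cancel₀ Complex.I_ne_zero h2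
  have h3 : (θ - η : ℝ) = (k : ℝ) * (2 * Real.pi) := by exact_mod_cast h4
  have hk0 : k = 0 := by
    by_contra hk0
    have : (1:ℝ) ≤ |(k:ℝ)| := by
      have : (1:ℤ) ≤ |k| := Int.one_le_abs hk0
      exact_mod_cast this
    rw [h3] at hd
    rw [abs_mul] at hd
    have hpi : (0:ℝ) < 2 * Real.pi := by positivity
    rw [abs_of_pos hpi] at hd
    nlinarith
  rw [hk0] at h3
  simp at h3
  linarith

lemma re_polar (r θ : ℝ) : ((r : ℂ) * Complex.exp (θ * Complex.I)).re = r * Real.cos θ := by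
  rw [Complex.re_ofReal_mul, Complex.exp_ofReal_mul_I_re]

lemma im_polar (r θ : ℝ) : ((r : ℂ) * Complex.exp (θ * Complex.I)).im = r * Real.sin θ := by
  rw [Complex.im_ofReal_mul, Complex.exp_ofReal_mul_I_im]

lemma arg_pos_of_im_pos {z : ℂ} (hz : 0 < z.im) : 0 < z.arg := by
  rcases lt_or_eq_of_le (Complex.arg_nonneg_iff.2 hz.le) with h | h
  · exact h
  · exact absurd (Complex.arg_eq_zero_iff.1 h.symm).2 hz.ne'

lemma arg_lt_pi_of_im_pos {z : ℂ} (hz : 0 < z.im) : z.arg < Real.pi :=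
  Complex.arg_lt_pi_iff.2 (Or.inr hz.ne')

lemma self_polar (z : ℂ) : z = ((‖z‖ : ℝ) : ℂ) * Complex.exp (z.arg * Complex.I) :=
  (Complex.norm_mul_exp_arg_mul_I z).symm

/-- for `z` in the upper half plane, `z - 1` has a polar angle in `[arg z, π)`. -/
lemma sub_one_polar {z : ℂ} (hz : 0 < z.im) :
    ∃ ψ : ℝ, z.arg ≤ ψ ∧ ψ < Real.pi ∧
      ∃ ρ : ℝ, 0 < ρ ∧ z - 1 = (ρ : ℂ) * Complex.exp (ψ * Complex.I) := by
  have h0 : z ≠ 0 := fun h => by simp [h] at hz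
  have hc : InCone z.arg Real.pi (z + -1) := by
    apply InCone.add (by linarith [arg_pos_of_im_pos hz])
    · exact ⟨‖z‖, norm_pos_iff.mpr h0, z.arg, le_refl _,
        (arg_lt_pi_of_im_pos hz).le, self_polar z⟩
    · refine ⟨1, one_pos, Real.pi, (arg_lt_pi_of_im_pos hz).le, le_refl _, ?_⟩
      rw [Complex.ofReal_one, one_mul]
      exact (Complex.exp_pi_mul_I).symm
  obtain ⟨ρ, hρ, ψ, h1, h2, h3⟩ := hc
  refine ⟨ψ, h1, ?_, ρ, hρ, by rw [← h3]; ring⟩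
  rcases lt_or_eq_of_le h2 with h | h
  · exact h
  · exfalso
    have : (z + -1).im = ρ * Real.sin ψ := by rw [h3, im_polar]
    rw [h, Real.sin_pi, mul_zero] at this
    simp only [Complex.add_im, Complex.neg_im, Complex.one_im, neg_zero, add_zero] at this
    exact hz.ne' this

open Polynomial in
noncomputable def Arow : ℕ → ℕ → Polynomial ℝ
  | 0 => fun i => if i = 0 then 1 else 0
  | (n+1) => fun i => Polynomial.X * ∑ j ∈ Finset.range i, Arow n j
      + ∑ j ∈ Finset.Ico i (n+1), Arow n j

/-- value of `Arow n i` at a complex number. -/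
noncomputable def va (z : ℂ) (n i : ℕ) : ℂ := Polynomial.aeval z (Arow n i)

lemma va_zero (z : ℂ) : va z 0 0 = 1 := by simp [va, Arow]

lemma va_succ (z : ℂ) (n i : ℕ) :
    va z (n+1) i = z * ∑ j ∈ Finset.range i, va z n j
      + ∑ j ∈ Finset.Ico i (n+1), va z n j := by
  simp [va, Arow, map_sum]

lemma va_succ' (z : ℂ) (n : ℕ) {i : ℕ} (hi : i ≤ n + 1) :
    va z (n+1) i = ∑ j ∈ Finset.range (n+1),
      (if j < i then z * va z n j else va z n j) := by
  rw [va_succ, Finset.range_eq_Ico (a := n+1), ← Finset.sum_Ico_consecutive _ (Nat.zero_le i) hi]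
  congr 1
  · rw [Finset.mul_sum, ← Finset.range_eq_Ico]
    exact Finset.sum_congr rfl fun j hj => by
      rw [if_pos (Finset.mem_range.1 hj)]
  · exact (Finset.sum_congr rfl fun j hj => by
      rw [if_neg (by simpa using (Finset.mem_Ico.1 hj).1.not_gt)]).symm

lemma va_diff (z : ℂ) (n : ℕ) {i : ℕ} (hi : i ≤ n) :
    va z (n+1) (i+1) = va z (n+1) i + (z - 1) * va z n i := by
  have h1 := va_succ' z n (Nat.succ_le_succ hi)
  have h2 := va_succ' z n (hi.trans (Nat.le_succ n))
  have hsingle : (z - 1) * va z n i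
      = ∑ j ∈ Finset.range (n+1), (if j = i then (z-1) * va z n j else 0) := by
    rw [Finset.sum_ite_eq' (Finset.range (n+1)) i, if_pos (Finset.mem_range.2 (by omega))]
  rw [h1, h2, hsingle, ← Finset.sum_add_distrib]
  have : ∀ j ∈ Finset.range (n+1),
      (if j < i then z * va z n j else va z n j) +
        (if j = i then (z-1) * va z n j else 0)
      = (if j < i + 1 then z * va z n j else va z n j) := by
    intro j _
    rcases lt_trichotomy j i with h | h | h
    · rw [if_pos h, if_neg h.ne, if_pos (h.trans (Nat.lt_succ_self i)), add_zero]
    · subst h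
      rw [if_neg (lt_irrefl j), if_pos rfl, if_pos (Nat.lt_succ_self j)]
      ring
    · rw [if_neg (Nat.lt_asymm h), if_neg h.ne', if_neg (by omega), add_zero]
  exact (Finset.sum_congr rfl this).symm

lemma va_top (z : ℂ) (n : ℕ) : va z (n+1) (n+1) = z * va z (n+1) 0 := by
  rw [va_succ, va_succ, Finset.Ico_self, Finset.sum_empty, Finset.range_zero,
    Finset.sum_empty, mul_zero, zero_add, add_zero, Finset.range_eq_Ico]

lemma polar_mul (r s θ η : ℝ) :
    ((r : ℂ) * Complex.exp (θ * Complex.I)) * ((s : ℂ) * Complex.exp (η * Complex.I))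
      = ((r * s : ℝ) : ℂ) * Complex.exp ((θ + η : ℝ) * Complex.I) := by
  push_cast
  rw [mul_mul_mul_comm, ← Complex.exp_add]
  congr 2
  ring

def GoodRow (z : ℂ) (n : ℕ) : Prop :=
  ∃ θ : ℕ → ℝ, (∀ i j, i ≤ j → j ≤ n → θ i ≤ θ j) ∧ θ n ≤ θ 0 + z.arg ∧
    ∀ i ≤ n, ∃ r : ℝ, 0 < r ∧ va z n i = (r : ℂ) * Complex.exp (θ i * Complex.I)

lemma goodRow {z : ℂ} (hz : 0 < z.im) : ∀ n, GoodRow z n := by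
  have hz0 : z ≠ 0 := fun h => by simp [h] at hz
  have hφ0 : 0 < z.arg := arg_pos_of_im_pos hz
  have hφπ : z.arg < Real.pi := arg_lt_pi_of_im_pos hz
  obtain ⟨ψ, hφψ, hψπ, ρ1, hρ1, hz1⟩ := sub_one_polar hz
  have habsz : 0 < ‖z‖ := norm_pos_iff.mpr hz0
  intro n
  induction n with
  | zero =>
    refine ⟨fun _ => 0, fun _ _ _ _ => le_refl _, by simpa using hφ0.le, ?_⟩
    intro i hi
    interval_cases i
    exact ⟨1, one_pos, by simp [va_zero]⟩
  | succ n ih =>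
    obtain ⟨θ, hmono, hwin, hrep⟩ := ih
    -- Step 1: window representation for each entry of the new row
    have key : ∀ i, i ≤ n+1 → ∃ r k : ℝ, 0 < r ∧ θ 0 ≤ k ∧ k ≤ θ 0 + 2*z.arg ∧
        (i ≤ n → θ i ≤ k ∧ k ≤ θ i + z.arg) ∧
        va z (n+1) i = (r : ℂ) * Complex.exp (k * Complex.I) := by
      intro i hin
      have hwd : (if i = 0 then θ n else if i ≤ n then θ (i-1) + z.arg else θ n + z.arg)
          - (if i ≤ n then θ i else θ 0 + z.arg) < Real.pi := by
        split_ifs with h1 h2 h3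
        · subst h1; linarith
        · omega
        · linarith [hmono (i-1) i (by omega) h3]
        · linarith
      have hcone : InCone (if i ≤ n then θ i else θ 0 + z.arg)
          (if i = 0 then θ n else if i ≤ n then θ (i-1) + z.arg else θ n + z.arg)
          (va z (n+1) i) := by
        rw [va_succ' z n hin]
        apply InCone.sum hwd _ ⟨0, Finset.mem_range.2 (Nat.succ_pos n)⟩
        intro j hj
        have hj' : j ≤ n := Nat.lt_succ_iff.1 (Finset.mem_range.1 hj)
        obtain ⟨r, hr, hrepj⟩ := hrep j hj'
        by_cases hji : j < i
        · rw [if_pos hji]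
          refine ⟨‖z‖ * r, mul_pos habsz hr, θ j + z.arg, ?_, ?_, ?_⟩
          · split_ifs with h
            · linarith [hmono i n h (le_refl n), hwin, hmono 0 j (Nat.zero_le j) hj']
            · linarith [hmono 0 j (Nat.zero_le j) hj']
          · rw [if_neg (by omega : ¬ i = 0)]
            split_ifs with h
            · linarith [hmono j (i-1) (by omega) (by omega)]
            · linarith [hmono j n hj' (le_refl n)]
          · rw [hrepj]
            conv_lhs => rw [self_polar z]
            rw [polar_mul, add_comm z.arg (θ j)]
        · rw [if_neg hji]
          have hij : i ≤ j := Nat.le_of_not_lt hji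
          have hin' : i ≤ n := hij.trans hj'
          refine ⟨r, hr, θ j, ?_, ?_, hrepj⟩
          · rw [if_pos hin']
            exact hmono i j hij hj'
          · split_ifs with h
            · exact hmono j n hj' (le_refl n)
            · linarith [hmono j n hj' (le_refl n), hwin,
                hmono 0 (i-1) (Nat.zero_le _) (by omega)]
      obtain ⟨r, hr, k, hk1, hk2, hrepk⟩ := hcone
      refine ⟨r, k, hr, ?_, ?_, ?_, hrepk⟩
      · split_ifs at hk1 with h
        · linarith [hmono 0 i (Nat.zero_le i) h]
        · linarith
      · split_ifs at hk2 with h h2 <;>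
          linarith [hmono 0 n (Nat.zero_le n) (le_refl n),
            hmono (i-1) n (by omega : i - 1 ≤ n) (le_refl n), hwin]
      · intro hin'
        constructor
        · rw [if_pos hin'] at hk1; exact hk1
        · split_ifs at hk2 with h
          · subst h; linarith
          · linarith [hmono (i-1) i (by omega) hin']
    -- Step 2: choose representations
    have key' : ∀ i : ℕ, ∃ rk : ℝ × ℝ, i ≤ n+1 → 0 < rk.1 ∧ θ 0 ≤ rk.2 ∧
        rk.2 ≤ θ 0 + 2*z.arg ∧ (i ≤ n → θ i ≤ rk.2 ∧ rk.2 ≤ θ i + z.arg) ∧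
        va z (n+1) i = (rk.1 : ℂ) * Complex.exp (rk.2 * Complex.I) := by
      intro i
      by_cases h : i ≤ n+1
      · obtain ⟨r, k, h1, h2, h3, h4, h5⟩ := key i h
        exact ⟨(r, k), fun _ => ⟨h1, h2, h3, h4, h5⟩⟩
      · exact ⟨(1, 0), fun hc => absurd hc h⟩
    choose rk hrk using key'
    -- Step 3: consecutive monotonicity
    have hstep : ∀ i, i ≤ n → (rk i).2 ≤ (rk (i+1)).2 := by
      intro i hin
      obtain ⟨hr1, hb1, hb2, hb3, hrep1⟩ := hrk i (by omega)
      obtain ⟨hr1', hb1', hb2', hb3', hrep1'⟩ := hrk (i+1) (by omega)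
      obtain ⟨hθi, hθi'⟩ := hb3 hin
      obtain ⟨ri, hri, hrepi⟩ := hrep i hin
      have hcone2 : InCone ((rk i).2) (θ i + ψ) (va z (n+1) (i+1)) := by
        rw [va_diff z n hin]
        apply InCone.add (by linarith)
        · exact ⟨(rk i).1, hr1, (rk i).2, le_refl _, by linarith, hrep1⟩
        · refine ⟨ρ1 * ri, mul_pos hρ1 hri, ψ + θ i, by linarith, by linarith, ?_⟩
          rw [hrepi, hz1, polar_mul]
      obtain ⟨r', hr', k', hk1', hk2', hrep'⟩ := hcone2
      have heq : k' = (rk (i+1)).2 := by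
        have hbd1 : θ i ≤ θ n := hmono i n hin (le_refl n)
        apply polar_unique hr' hr1' _ (hrep'.symm.trans hrep1')
        rw [abs_lt]
        constructor <;> linarith [Real.pi_pos]
      linarith [heq ▸ hk1']
    have hmono' : ∀ i j, i ≤ j → j ≤ n+1 → (rk i).2 ≤ (rk j).2 := by
      intro i j
      induction j with
      | zero =>
        intro h0 _
        have hi0 : i = 0 := Nat.le_zero.1 h0
        subst hi0
        exact le_refl _
      | succ m ihm =>
        intro hij hjn
        rcases Nat.eq_or_lt_of_le hij with h | h
        · rw [h]
        · exact (ihm (by omega) (by omega)).trans (hstep m (by omega))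
    -- Step 4: top entry
    have htop : (rk (n+1)).2 = (rk 0).2 + z.arg := by
      obtain ⟨hr1, hb1, hb2, hb3, hrep1⟩ := hrk 0 (by omega)
      obtain ⟨hr1', hb1', hb2', hb3', hrep1'⟩ := hrk (n+1) (by omega)
      have hv : va z (n+1) (n+1)
          = ((‖z‖ * (rk 0).1 : ℝ) : ℂ)
            * Complex.exp (((rk 0).2 + z.arg : ℝ) * Complex.I) := by
        rw [va_top, hrep1]
        conv_lhs => rw [self_polar z]
        rw [polar_mul, add_comm z.arg ((rk 0).2)]
      obtain ⟨hb3l, hb3u⟩ := hb3 (Nat.zero_le n)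
      symm
      apply polar_unique (mul_pos habsz hr1) hr1' _ (hv.symm.trans hrep1')
      rw [abs_lt]
      constructor <;> linarith [Real.pi_pos]
    refine ⟨fun i => (rk i).2, hmono', by exact le_of_eq htop, ?_⟩
    intro i hi
    exact ⟨(rk i).1, (hrk i hi).1, (hrk i hi).2.2.2.2⟩

-- ## Power series identification

lemma tele (u v : ℝ) (huv : v = u + 1) (n : ℕ) :
    ∀ i, i ≤ n + 1 → ∑ j ∈ Finset.range i, u^j * v^(n - j)
      = v^(n+1) - u^i * v^(n+1-i) := by
  intro i
  induction i with
  | zero => intro _; simp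
  | succ m ih =>
    intro h
    rw [Finset.sum_range_succ, ih (by omega)]
    have h1 : n + 1 - m = (n - m) + 1 := by omega
    have h2 : n + 1 - (m+1) = n - m := by omega
    rw [h1, h2, pow_succ, huv]
    ring

lemma coe_sum (s : Finset ℕ) (F : ℕ → Polynomial ℝ) :
    ((∑ j ∈ s, F j : Polynomial ℝ) : PowerSeries ℝ) = ∑ j ∈ s, ((F j : Polynomial ℝ) : PowerSeries ℝ) := by
  simp only [← Polynomial.coeToPowerSeries.ringHom_apply, map_sum]

lemma csm0 (g : PowerSeries ℝ) :
    PowerSeries.coeff 0 ((1 - PowerSeries.X) * g) = PowerSeries.coeff 0 g := by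
  rw [sub_mul, one_mul, map_sub, PowerSeries.coeff_zero_X_mul, sub_zero]

lemma csm1 (g : PowerSeries ℝ) (m : ℕ) :
    PowerSeries.coeff (m+1) ((1 - PowerSeries.X) * g)
      = PowerSeries.coeff (m+1) g - PowerSeries.coeff m g := by
  rw [sub_mul, one_mul, map_sub, PowerSeries.coeff_succ_X_mul]

lemma coeArow : ∀ n : ℕ, ∀ i ≤ n, ((Arow n i : Polynomial ℝ) : PowerSeries ℝ)
    = (1 - PowerSeries.X)^(n+1)
      * PowerSeries.mk (fun m => (m:ℝ)^i * (1 + (m:ℝ))^(n-i)) := by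
  intro n
  induction n with
  | zero =>
    intro i hi
    interval_cases i
    show ((Arow 0 0 : Polynomial ℝ) : PowerSeries ℝ) = _
    have : Arow 0 0 = 1 := by simp [Arow]
    rw [this, Polynomial.coe_one, pow_one]
    ext m
    cases m with
    | zero => rw [csm0, PowerSeries.coeff_mk]; simp
    | succ m => rw [csm1, PowerSeries.coeff_mk, PowerSeries.coeff_mk]; simp
  | succ n ih =>
    intro i hi
    have hunfold : Arow (n+1) i = Polynomial.X * ∑ j ∈ Finset.range i, Arow n j
        + ∑ j ∈ Finset.Ico i (n+1), Arow n j := by simp [Arow]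
    have hcoe : ((Arow (n+1) i : Polynomial ℝ) : PowerSeries ℝ)
        = PowerSeries.X * ∑ j ∈ Finset.range i, ((Arow n j : Polynomial ℝ) : PowerSeries ℝ)
          + ∑ j ∈ Finset.Ico i (n+1), ((Arow n j : Polynomial ℝ) : PowerSeries ℝ) := by
      rw [hunfold, Polynomial.coe_add, Polynomial.coe_mul, Polynomial.coe_X, coe_sum, coe_sum]
    rw [hcoe]
    have hr1 : ∀ j ∈ Finset.range i, ((Arow n j : Polynomial ℝ) : PowerSeries ℝ)
        = (1 - PowerSeries.X)^(n+1) * PowerSeries.mk (fun m => (m:ℝ)^j * (1 + (m:ℝ))^(n-j)) :=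
      fun j hj => ih j (by have := Finset.mem_range.1 hj; omega)
    have hr2 : ∀ j ∈ Finset.Ico i (n+1), ((Arow n j : Polynomial ℝ) : PowerSeries ℝ)
        = (1 - PowerSeries.X)^(n+1) * PowerSeries.mk (fun m => (m:ℝ)^j * (1 + (m:ℝ))^(n-j)) :=
      fun j hj => ih j (by have := Finset.mem_Ico.1 hj; omega)
    rw [Finset.sum_congr rfl hr1, Finset.sum_congr rfl hr2, ← Finset.mul_sum, ← Finset.mul_sum]
    have hinner : (1 - PowerSeries.X)
          * PowerSeries.mk (fun m => (m:ℝ)^i * (1 + (m:ℝ))^(n+1-i))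
        = PowerSeries.X * (∑ j ∈ Finset.range i, PowerSeries.mk (fun m => (m:ℝ)^j * (1 + (m:ℝ))^(n-j)))
          + ∑ j ∈ Finset.Ico i (n+1), PowerSeries.mk (fun m => (m:ℝ)^j * (1 + (m:ℝ))^(n-j)) := by
      ext m
      cases m with
      | zero =>
        rw [csm0, PowerSeries.coeff_mk, map_add, PowerSeries.coeff_zero_X_mul, map_sum, zero_add]
        simp only [PowerSeries.coeff_mk]
        push_cast
        have hz : ∀ j : ℕ, (0:ℝ)^j * (1 + (0:ℝ))^(n-j) = if j = 0 then 1 else 0 := by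
          intro j
          rw [zero_pow_eq]
          simp
        rw [Finset.sum_congr rfl (fun j _ => hz j), Finset.sum_ite_eq' (Finset.Ico i (n+1)) 0 (fun _ => (1:ℝ))]
        rw [zero_pow_eq]
        by_cases h0 : i = 0
        · subst h0; simp
        · rw [if_neg h0, if_neg (by simp [Finset.mem_Ico]; omega)]
          simp
      | succ m =>
        rw [csm1, PowerSeries.coeff_mk, PowerSeries.coeff_mk, map_add, map_sum,
          PowerSeries.coeff_succ_X_mul, map_sum]
        simp only [PowerSeries.coeff_mk]
        have t1 : ∑ j ∈ Finset.range i, ((m:ℝ))^j * (1 + (m:ℝ))^(n-j)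
            = (1+(m:ℝ))^(n+1) - ((m:ℝ))^i * (1+(m:ℝ))^(n+1-i) :=
          tele (m:ℝ) (1+(m:ℝ)) (by ring) n i hi
        have t2 : ∑ j ∈ Finset.Ico i (n+1), ((m+1:ℕ):ℝ)^j * (1 + ((m+1:ℕ):ℝ))^(n-j)
            = (((m+1:ℕ):ℝ))^i * (1+((m+1:ℕ):ℝ))^(n+1-i) - (((m+1:ℕ):ℝ))^(n+1) * (1+((m+1:ℕ):ℝ))^(n+1-(n+1)) := by
          rw [Finset.sum_Ico_eq_sub _ hi,
            tele ((m+1:ℕ):ℝ) (1+((m+1:ℕ):ℝ)) (by ring) n (n+1) (le_refl _),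
            tele ((m+1:ℕ):ℝ) (1+((m+1:ℕ):ℝ)) (by ring) n i hi]
          ring
        rw [t1, t2]
        have h3 : n + 1 - (n+1) = 0 := by omega
        rw [h3, pow_zero]
        push_cast
        ring
    conv_rhs => rw [pow_succ, mul_assoc, hinner]
    ring


/-- Theorem 1.1(a), Brändén: if `h = c₀ + c₁x + ⋯ + cₙxⁿ` has
nonnegative coefficients, then `𝒟ₙ(h)`, defined by
`∑_{m ≥ 0} f(m) xᵐ = 𝒟ₙ(h)(x)/(1−x)^(n+1)` with `f(x) = ∑ cᵢ xⁱ (1+x)^(n−i)`,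
has only real roots. -/
theorem statement0 (n : ℕ)
    (c : ℕ → ℝ) (hc : ∀ i ≤ n, 0 ≤ c i)
    (h : Polynomial ℝ)
    (hh : h = ∑ i ∈ Finset.range (n + 1), Polynomial.C (c i) * Polynomial.X ^ i)
    (D : Polynomial ℝ) (hDdeg : D.natDegree ≤ n)
    (hD : (D : PowerSeries ℝ) =
      (1 - PowerSeries.X) ^ (n + 1) *
        PowerSeries.mk fun m => ∑ i ∈ Finset.range (n + 1),
          c i * (m : ℝ) ^ i * (1 + (m : ℝ)) ^ (n - i)) :
    RealRooted D := by
  have hmk : (PowerSeries.mk fun m => ∑ i ∈ Finset.range (n + 1),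
        c i * (m : ℝ) ^ i * (1 + (m : ℝ)) ^ (n - i))
      = ∑ i ∈ Finset.range (n+1), PowerSeries.C (c i)
          * PowerSeries.mk (fun m => (m:ℝ)^i * (1+(m:ℝ))^(n-i)) := by
    ext m
    rw [PowerSeries.coeff_mk, map_sum]
    exact Finset.sum_congr rfl fun i _ => by
      rw [PowerSeries.coeff_C_mul, PowerSeries.coeff_mk]; ring
  have hD2 : (D : PowerSeries ℝ)
      = ((∑ i ∈ Finset.range (n+1), Polynomial.C (c i) * Arow n i : Polynomial ℝ) : PowerSeries ℝ) := by
    rw [hD, hmk, Finset.mul_sum, coe_sum]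
    refine Finset.sum_congr rfl fun i hi => ?_
    rw [Polynomial.coe_mul, Polynomial.coe_C,
      coeArow n i (Nat.lt_succ_iff.1 (Finset.mem_range.1 hi))]
    ring
  have hD' : D = ∑ i ∈ Finset.range (n+1), Polynomial.C (c i) * Arow n i :=
    Polynomial.coe_inj.1 hD2
  by_cases hall : ∀ i ∈ Finset.range (n+1), c i = 0
  · left
    rw [hD']
    exact Finset.sum_eq_zero fun i hi => by rw [hall i hi, map_zero, zero_mul]
  · right
    push_neg at hall
    obtain ⟨k, hkmem, hck⟩ := hall
    have hckpos : 0 < c k :=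
      lt_of_le_of_ne (hc k (Nat.lt_succ_iff.1 (Finset.mem_range.1 hkmem))) (Ne.symm hck)
    have hval : ∀ z : ℂ, 0 < z.im → Polynomial.aeval z D ≠ 0 := by
      intro z hz
      obtain ⟨θ, hmono, hwin, hrep⟩ := goodRow hz n
      have e1 : ∀ i ∈ Finset.range (n+1),
          Polynomial.aeval z (Polynomial.C (c i) * Arow n i) = ((c i : ℝ) : ℂ) * va z n i := by
        intro i _
        rw [map_mul, Polynomial.aeval_C, Complex.coe_algebraMap]
        rfl
      have hDz : Polynomial.aeval z D
          = ∑ i ∈ (Finset.range (n+1)).filter (fun i => c i ≠ 0),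
              ((c i : ℝ) : ℂ) * va z n i := by
        rw [hD', map_sum, Finset.sum_congr rfl e1]
        have hfil : ∀ x ∈ Finset.range (n+1), ((c x : ℝ) : ℂ) * va z n x ≠ 0 → c x ≠ 0 := by
          intro x hx hne hcx
          exact hne (by rw [hcx]; simp)
        exact (Finset.sum_filter_of_ne hfil).symm
      have hIC : InCone (θ 0) (θ n)
          (∑ i ∈ (Finset.range (n+1)).filter (fun i => c i ≠ 0), ((c i : ℝ) : ℂ) * va z n i) := by
        apply InCone.sum (by linarith [arg_lt_pi_of_im_pos hz]) _
          ⟨k, Finset.mem_filter.2 ⟨hkmem, hck⟩⟩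
        intro i hi
        obtain ⟨hir, hci⟩ := Finset.mem_filter.1 hi
        have hin : i ≤ n := Nat.lt_succ_iff.1 (Finset.mem_range.1 hir)
        have hcip : 0 < c i := lt_of_le_of_ne (hc i hin) (Ne.symm hci)
        obtain ⟨r, hr, hrepi⟩ := hrep i hin
        refine ⟨c i * r, mul_pos hcip hr, θ i, hmono 0 i (Nat.zero_le i) hin,
          hmono i n hin (le_refl n), ?_⟩
        rw [hrepi]
        push_cast
        ring
      rw [hDz]
      exact hIC.ne_zero
    intro w hw
    rw [Polynomial.mem_roots'] at hw
    have hw0 : Polynomial.aeval w D = 0 := by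
      have h2 := hw.2
      rwa [Polynomial.IsRoot, Polynomial.eval_map, ← Polynomial.aeval_def] at h2
    by_contra him
    rcases Ne.lt_or_gt him with hneg | hpos
    · have hc0 : Polynomial.aeval ((starRingEnd ℂ) w) D = 0 := by
        rw [Polynomial.aeval_conj, hw0, map_zero]
      exact hval _ (by rw [Complex.conj_im]; linarith) hc0
    · exact hval w hpos hw0
end
end

section
/- Let n ≥ 1 and let p_0, p_1, ..., p_n ∈ ℝ[x] satisfy: deg p_i ≤ n−1 and x^{n−1}·p_i(1/x) = p_{n−1−i}(x) for all 0 ≤ i ≤ n−1; deg p_n ≤ n and x^n·p_n(1/x) = p_n(x). For 0 ≤ k ≤ n set q_k(x) = x·∑_{i=0}^{k−1} p_i(x) + ∑_{i=k}^{n} p_i(x). Then for all reals c_0, ..., c_n, the symmetric decomposition of ∑_{k=0}^n c_k·q_k(x) with respect to n is (a, b), where a(x) = (c_0 + c_1 + ... + c_n)·p_n(x) + ∑_{i=0}^{n−1} (c_0 + c_1 + ... + c_i + (c_0 + c_1 + ... + c_{n−i−1})·x)·p_i(x) and b(x) = ∑_{i=0}^{n−1} (c_n + c_{n−1} + ... +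 c_{n−i} − c_0 − c_1 − ... − c_i)·p_i(x); that is, ∑_{k=0}^n c_k·q_k(x) = a(x) + x·b(x), x^n·a(1/x) = a(x), and x^{n−1}·b(1/x) = b(x). -/
open Polynomial PowerSeries Finset

noncomputable section

lemma st14_sumsplit (n i : ℕ) (hi : i ≤ n) (c : ℕ → ℝ) :
    (∑ j ∈ Finset.range (n - i), c j) + ∑ k ∈ Finset.Icc (n - i) n, c k
      = ∑ k ∈ Finset.range (n+1), c k := by
  rw [← Finset.Ico_add_one_right_eq_Icc, Finset.range_eq_Ico, Finset.range_eq_Ico]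
  exact Finset.sum_Ico_consecutive (m := 0) (n := n - i) (k := n + 1) c (by omega) (by omega)

lemma st14_sumsplit2 (n i : ℕ) (hi : i < n) (c : ℕ → ℝ) :
    (∑ k ∈ Finset.Icc (i+1) n, c k) + ∑ j ∈ Finset.range (i+1), c j
      = ∑ k ∈ Finset.range (n+1), c k := by
  rw [← Finset.Ico_add_one_right_eq_Icc, Finset.range_eq_Ico, Finset.range_eq_Ico, add_comm]
  exact Finset.sum_Ico_consecutive (m := 0) (n := i + 1) (k := n + 1) c (by omega) (by omega)

lemma st14_reindex (n i : ℕ) (hi : i < n) (c : ℕ → ℝ) :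
    ∑ j ∈ Finset.range (i+1), c (n - j) = ∑ k ∈ Finset.Icc (n - i) n, c k := by
  rw [← Finset.Ico_add_one_right_eq_Icc, Finset.sum_Ico_eq_sum_range]
  have h : n + 1 - (n - i) = i + 1 := by omega
  rw [h, ← Finset.sum_range_reflect]
  refine Finset.sum_congr rfl fun j hj => ?_
  simp only [Finset.mem_range] at hj
  congr 1
  omega

lemma st14_reflect_Cmul (N : ℕ) (r : ℝ) (q : Polynomial ℝ) :
    (Polynomial.C r * q).reflect N = Polynomial.C r * q.reflect N := by
  ext i
  simp [Polynomial.coeff_reflect]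

lemma st14_reflect_lin (n : ℕ) (hn : 1 ≤ n) (A D : ℝ) (q : Polynomial ℝ)
    (hq : q.natDegree ≤ n - 1) :
    ((Polynomial.C A + Polynomial.C D * Polynomial.X) * q).reflect n
      = (Polynomial.C D + Polynomial.C A * Polynomial.X) * q.reflect (n-1) := by
  have h1 : n = 1 + (n-1) := by omega
  have hd : (Polynomial.C A + Polynomial.C D * Polynomial.X).natDegree ≤ 1 := by
    compute_degree
  have key := Polynomial.reflect_mul (Polynomial.C A + Polynomial.C D * Polynomial.X) q hd hq
  rw [← h1] at key
  rw [key]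
  congr 1
  have hX : (Polynomial.X : Polynomial ℝ).reflect 1 = 1 := by
    rw [← pow_one (Polynomial.X : Polynomial ℝ), Polynomial.reflect_monomial]
    simp
  have hx : (Polynomial.C D * Polynomial.X).reflect 1 = Polynomial.C D := by
    rw [st14_reflect_Cmul, hX, mul_one]
  rw [Polynomial.reflect_add, Polynomial.reflect_C, hx]
  ring

lemma st14_reflect_sum {ι : Type*} (s : Finset ι) (f : ι → Polynomial ℝ) (N : ℕ) :
    (∑ i ∈ s, f i).reflect N = ∑ i ∈ s, (f i).reflect N := by
  classical
  induction s using Finset.induction with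
  | empty => simp
  | insert _ _ h ih =>
      rw [Finset.sum_insert h, Finset.sum_insert h, Polynomial.reflect_add, ih]

/-- Lemma 4.2: explicit formula for the symmetric decomposition
of `∑ₖ cₖ·qₖ` with respect to `n`. -/
theorem statement14 (n : ℕ) (hn : 1 ≤ n) (p : ℕ → Polynomial ℝ)
    (hdeg : ∀ i < n, (p i).natDegree ≤ n - 1)
    (hsym : ∀ i < n, (p i).reflect (n - 1) = p (n - 1 - i))
    (hdegn : (p n).natDegree ≤ n)
    (hsymn : (p n).reflect n = p n)
    (c : ℕ → ℝ) :
    IsSymmDecomp n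
      (∑ k ∈ Finset.range (n + 1), Polynomial.C (c k) *
        (Polynomial.X * (∑ i ∈ Finset.range k, p i) + ∑ i ∈ Finset.Icc k n, p i))
      (Polynomial.C (∑ k ∈ Finset.range (n + 1), c k) * p n +
        ∑ i ∈ Finset.range n,
          (Polynomial.C (∑ j ∈ Finset.range (i + 1), c j) +
            Polynomial.C (∑ j ∈ Finset.range (n - i), c j) * Polynomial.X) * p i)
      (∑ i ∈ Finset.range n,
        Polynomial.C ((∑ j ∈ Finset.range (i + 1), c (n - j)) -
          ∑ j ∈ Finset.range (i + 1), c j) * p i) := by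
  have haR : (Polynomial.C (∑ k ∈ Finset.range (n + 1), c k) * p n +
        ∑ i ∈ Finset.range n,
          (Polynomial.C (∑ j ∈ Finset.range (i + 1), c j) +
            Polynomial.C (∑ j ∈ Finset.range (n - i), c j) * Polynomial.X) * p i).reflect n
      = Polynomial.C (∑ k ∈ Finset.range (n + 1), c k) * p n +
        ∑ i ∈ Finset.range n,
          (Polynomial.C (∑ j ∈ Finset.range (i + 1), c j) +
            Polynomial.C (∑ j ∈ Finset.range (n - i), c j) * Polynomial.X) * p i := by
    rw [Polynomial.reflect_add, st14_reflect_Cmul, hsymn, st14_reflect_sum]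
    congr 1
    conv_rhs => rw [← Finset.sum_range_reflect]
    refine Finset.sum_congr rfl fun j hj => ?_
    simp only [Finset.mem_range] at hj
    rw [st14_reflect_lin n hn _ _ _ (hdeg j hj), hsym j hj]
    have h1 : n - 1 - j + 1 = n - j := by omega
    have h2 : n - (n - 1 - j) = j + 1 := by omega
    rw [h1, h2]
  have hbR : (∑ i ∈ Finset.range n,
        Polynomial.C ((∑ j ∈ Finset.range (i + 1), c (n - j)) -
          ∑ j ∈ Finset.range (i + 1), c j) * p i).reflect (n-1)
      = ∑ i ∈ Finset.range n,
        Polynomial.C ((∑ j ∈ Finset.range (i + 1), c (n - j)) -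
          ∑ j ∈ Finset.range (i + 1), c j) * p i := by
    rw [st14_reflect_sum]
    conv_rhs => rw [← Finset.sum_range_reflect]
    refine Finset.sum_congr rfl fun j hj => ?_
    simp only [Finset.mem_range] at hj
    rw [st14_reflect_Cmul, hsym j hj]
    have h1 : n - 1 - j + 1 = n - j := by omega
    have hE : (∑ j' ∈ Finset.range (n - j), c (n - j')) - ∑ j' ∈ Finset.range (n - j), c j'
        = (∑ j' ∈ Finset.range (j + 1), c (n - j')) - ∑ j' ∈ Finset.range (j + 1), c j' := by
      have r1 := st14_reindex n j hj c
      have r2 := st14_reindex n (n-1-j) (by omega) c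
      rw [h1, show n - (n-1-j) = j + 1 by omega] at r2
      have s1 := st14_sumsplit n j (le_of_lt hj) c
      have s2 := st14_sumsplit2 n j hj c
      linarith
    rw [h1, hE]
  refine ⟨?_, ?_, ?_, ?_, ?_⟩
  · -- the decomposition identity
    have step1 : (∑ k ∈ Finset.range (n + 1), Polynomial.C (c k) *
          (Polynomial.X * (∑ i ∈ Finset.range k, p i) + ∑ i ∈ Finset.Icc k n, p i))
        = (∑ k ∈ Finset.range (n+1), ∑ i ∈ Finset.range k,
              Polynomial.C (c k) * (Polynomial.X * p i))
          + ∑ k ∈ Finset.range (n+1), ∑ i ∈ Finset.Icc k n,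
              Polynomial.C (c k) * p i := by
      rw [← Finset.sum_add_distrib]
      refine Finset.sum_congr rfl fun k _ => ?_
      rw [mul_add, Finset.mul_sum, Finset.mul_sum, Finset.mul_sum]
    have swap1 : (∑ k ∈ Finset.range (n+1), ∑ i ∈ Finset.range k,
          Polynomial.C (c k) * (Polynomial.X * p i))
        = ∑ i ∈ Finset.range n, Polynomial.C (∑ k ∈ Finset.Icc (i+1) n, c k) *
            (Polynomial.X * p i) := by
      rw [Finset.sum_comm' (t' := Finset.range n) (s' := fun i => Finset.Icc (i+1) n)
        (by intro k i; simp only [Finset.mem_range, Finset.mem_Icc]; omega)]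
      refine Finset.sum_congr rfl fun i _ => ?_
      rw [map_sum, Finset.sum_mul]
    have swap2 : (∑ k ∈ Finset.range (n+1), ∑ i ∈ Finset.Icc k n,
          Polynomial.C (c k) * p i)
        = (∑ i ∈ Finset.range n, Polynomial.C (∑ j ∈ Finset.range (i+1), c j) * p i)
          + Polynomial.C (∑ k ∈ Finset.range (n+1), c k) * p n := by
      rw [Finset.sum_comm' (t' := Finset.range (n+1)) (s' := fun i => Finset.range (i+1))
        (by intro k i; simp only [Finset.mem_range, Finset.mem_Icc]; omega)]
      rw [Finset.sum_range_succ]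
      congr 1
      · refine Finset.sum_congr rfl fun i _ => ?_
        rw [map_sum, Finset.sum_mul]
      · rw [map_sum, Finset.sum_mul]
    rw [step1, swap1, swap2, Finset.mul_sum]
    have e : (∑ i ∈ Finset.range n, Polynomial.C (∑ k ∈ Finset.Icc (i+1) n, c k) *
          (Polynomial.X * p i)) + ∑ i ∈ Finset.range n,
            Polynomial.C (∑ j ∈ Finset.range (i+1), c j) * p i
        = (∑ i ∈ Finset.range n, Polynomial.X *
            (Polynomial.C ((∑ j ∈ Finset.range (i + 1), c (n - j)) -
              ∑ j ∈ Finset.range (i + 1), c j) * p i))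
          + ∑ i ∈ Finset.range n,
            (Polynomial.C (∑ j ∈ Finset.range (i + 1), c j) +
              Polynomial.C (∑ j ∈ Finset.range (n - i), c j) * Polynomial.X) * p i := by
      rw [← Finset.sum_add_distrib, ← Finset.sum_add_distrib]
      refine Finset.sum_congr rfl fun i hi => ?_
      simp only [Finset.mem_range] at hi
      have hB : (∑ k ∈ Finset.Icc (i+1) n, c k)
          = (∑ j ∈ Finset.range (n - i), c j) +
            ((∑ j ∈ Finset.range (i + 1), c (n - j)) - ∑ j ∈ Finset.range (i + 1), c j) := by
        have s1 := st14_sumsplit n i (le_of_lt hi) c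
        have s2 := st14_sumsplit2 n i hi c
        have h2 := st14_reindex n i hi c
        linarith [h2 ▸ s1]
      rw [hB, map_add]
      ring
    linear_combination e
  · -- degree of a
    refine le_trans (Polynomial.natDegree_add_le _ _) (max_le ?_ ?_)
    · exact le_trans (Polynomial.natDegree_C_mul_le _ _) hdegn
    · refine Polynomial.natDegree_sum_le_of_forall_le _ _ fun i hi => ?_
      refine le_trans Polynomial.natDegree_mul_le ?_
      have h1 := hdeg i (Finset.mem_range.mp hi)
      have h2 : (Polynomial.C (∑ j ∈ Finset.range (i + 1), c j) +
          Polynomial.C (∑ j ∈ Finset.range (n - i), c j) * Polynomial.X).natDegree ≤ 1 := by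
        compute_degree
      omega
  · -- degree of b
    refine Polynomial.natDegree_sum_le_of_forall_le _ _ fun i hi => ?_
    exact le_trans (Polynomial.natDegree_C_mul_le _ _) (hdeg i (Finset.mem_range.mp hi))
  · -- symmetry of a
    intro i hi
    conv_rhs => rw [← haR]
    rw [Polynomial.coeff_reflect, Polynomial.revAt_le hi]
  · -- symmetry of b
    intro i hi
    conv_rhs => rw [← hbR]
    rw [Polynomial.coeff_reflect, Polynomial.revAt_le hi]
end
end

section
/- For every n ≥ 1, every positive integer r, every k ∈ {0, 1, ..., n} and every j ∈ {0, 1, ..., r−1}, the polynomials p^{⟨r,j⟩}_{n,k} satisfy the recurrence p^{⟨r,j⟩}_{n,k}(x) = x·∑_{ℓ=j+1}^{r−1} ∑_{i=0}^{n−1} p^{⟨r,ℓ⟩}_{n−1,i}(x) + x·∑_{i=0}^{k−1} p^{⟨r,j⟩}_{n−1,i}(x) + ∑_{i=k}^{n−1} p^{⟨r,j⟩}_{n−1,i}(x) + ∑_{ℓ=0}^{j−1} ∑_{i=0}^{n−1} p^{⟨r,ℓ⟩}_{n−1,i}(x). -/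
open Polynomial PowerSeries Finset

noncomputable section

/-- `pnk n k` is the polynomial `p_{n,k} = 𝒟ₙ(xᵏ)`, the polynomial of degree at most `n`
determined by `∑_{m ≥ 0} mᵏ (1+m)^(n−k) xᵐ = p_{n,k}(x)/(1−x)^(n+1)`. -/
def pnk (n k : ℕ) : Polynomial ℝ :=
  PowerSeries.trunc (n + 1)
    ((1 - PowerSeries.X : PowerSeries ℝ) ^ (n + 1) *
      PowerSeries.mk fun m => (m : ℝ) ^ k * (1 + (m : ℝ)) ^ (n - k))

/-- `prjnk r j n k` is the polynomial `p^{⟨r,j⟩}_{n,k} = S^r_j((1+x+⋯+x^(r−1))ⁿ · p_{n,k}(x))`,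
where `S^r_j` is the `j`-th Veronese `r`-section operator; it has degree at most `n`. -/
def prjnk (r j n k : ℕ) : Polynomial ℝ :=
  ∑ m ∈ Finset.range (n + 1),
    Polynomial.C
      (((∑ i ∈ Finset.range r, (Polynomial.X : Polynomial ℝ) ^ i) ^ n * pnk n k).coeff
        (r * m + j)) *
      Polynomial.X ^ m

namespace St15

def ds (g : ℕ → ℝ) : ℕ → ℝ
  | 0 => g 0
  | (m+1) => g (m+1) - g m

lemma one_sub_X_mul_mk (g : ℕ → ℝ) :
    (1 - PowerSeries.X) * PowerSeries.mk g = PowerSeries.mk (ds g) := by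
  ext N
  rw [sub_mul, one_mul, map_sub]
  cases N with
  | zero => simp [ds]
  | succ m => simp [coeff_succ_X_mul, ds]

lemma coeff_X_pow_mul' (φ : PowerSeries ℝ) (s N : ℕ) :
    PowerSeries.coeff N (PowerSeries.X ^ s * φ) =
      if s ≤ N then PowerSeries.coeff (N - s) φ else 0 := by
  split
  · next h =>
    conv_lhs => rw [show N = (N - s) + s by omega]
    rw [PowerSeries.coeff_X_pow_mul]
  · next h =>
    rw [PowerSeries.coeff_mul]
    apply Finset.sum_eq_zero
    rintro ⟨a, b⟩ hab
    replace hab : a + b = N := by simpa using hab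
    have : PowerSeries.coeff a ((PowerSeries.X : PowerSeries ℝ) ^ s) = 0 := by
      rw [PowerSeries.coeff_X_pow]
      simp only [ite_eq_right_iff]
      intro h'; omega
    simp only [this, zero_mul]

lemma deg_drop (P : Polynomial ℝ) (hP : 1 ≤ P.natDegree) :
    (P - P.comp (Polynomial.X - Polynomial.C 1)).natDegree < P.natDegree := by
  have hP0 : P ≠ 0 := by intro h; rw [h] at hP; simp at hP
  have hq : (Polynomial.X - Polynomial.C (1:ℝ)).natDegree = 1 := by
    simpa using Polynomial.natDegree_X_sub_C (1:ℝ)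
  have hdeg : (P.comp (Polynomial.X - Polynomial.C 1)).natDegree = P.natDegree := by
    rw [Polynomial.natDegree_comp, hq, mul_one]
  have hc0 : P.comp (Polynomial.X - Polynomial.C 1) ≠ 0 := by
    intro h
    rw [h, Polynomial.natDegree_zero] at hdeg
    omega
  have hlc : P.leadingCoeff = (P.comp (Polynomial.X - Polynomial.C 1)).leadingCoeff := by
    rw [Polynomial.leadingCoeff_comp (by rw [hq]; norm_num)]
    rw [(Polynomial.monic_X_sub_C (1:ℝ)).leadingCoeff, one_pow, mul_one]
  have hd : (P - P.comp (Polynomial.X - Polynomial.C 1)).degree < P.degree := by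
    apply Polynomial.degree_sub_lt _ hP0 hlc
    rw [Polynomial.degree_eq_natDegree hP0, Polynomial.degree_eq_natDegree hc0, hdeg]
  rcases eq_or_ne (P - P.comp (Polynomial.X - Polynomial.C 1)) 0 with h0 | h0
  · rw [h0, Polynomial.natDegree_zero]; omega
  · exact Polynomial.natDegree_lt_natDegree h0 hd


lemma tail_vanish : ∀ (t : ℕ) (P : Polynomial ℝ) (g : ℕ → ℝ) (s : ℕ),
    P.natDegree < t → (∀ m, s ≤ m → g m = P.eval (m:ℝ)) →
    ∀ N, t + s ≤ N → PowerSeries.coeff N ((1 - PowerSeries.X) ^ t * PowerSeries.mk g) = 0 := by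
  intro t
  induction t with
  | zero => intro P _ _ h; omega
  | succ t IH =>
    intro P g s hdeg hg N hN
    rw [pow_succ, mul_assoc, one_sub_X_mul_mk]
    cases t with
    | zero =>
      -- P is constant
      have hP : P = Polynomial.C (P.coeff 0) := Polynomial.eq_C_of_natDegree_le_zero (by omega)
      simp only [pow_zero, one_mul, PowerSeries.coeff_mk]
      obtain ⟨m, rfl⟩ : ∃ m, N = m + 1 := ⟨N - 1, by omega⟩
      show ds g (m+1) = 0
      rw [ds, hg _ (by omega), hg _ (by omega), hP]
      simp
    | succ u =>
      -- use IH with P' := P - P.comp (X - C 1), s+1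
      set P' := P - P.comp (Polynomial.X - Polynomial.C 1) with hP'
      have hdeg' : P'.natDegree < u + 1 := by
        rcases Nat.lt_or_ge P.natDegree 1 with h1 | h1
        · have hP : P = Polynomial.C (P.coeff 0) :=
            Polynomial.eq_C_of_natDegree_le_zero (by omega)
          have : P' = 0 := by
            rw [hP', hP]; simp
          rw [this, Polynomial.natDegree_zero]; omega
        · have := deg_drop P h1; rw [← hP'] at this; omega
      apply IH P' (ds g) (s+1) hdeg' ?_ N (by omega)
      intro m hm
      obtain ⟨u', rfl⟩ : ∃ u', m = u' + 1 := ⟨m - 1, by omega⟩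
      rw [ds, hg _ (by omega), hg _ (by omega), hP']
      push_cast
      simp [Polynomial.eval_comp]

def fR (n k : ℕ) : ℕ → ℝ := fun m => (m:ℝ)^k * (1+(m:ℝ))^(n-k)
def F (n k : ℕ) : PowerSeries ℝ := PowerSeries.mk (fR n k)

lemma pnk_coe (n k : ℕ) (hk : k ≤ n) :
    ((pnk n k : Polynomial ℝ) : PowerSeries ℝ) = (1 - PowerSeries.X)^(n+1) * F n k := by
  ext N
  rw [Polynomial.coeff_coe, pnk, PowerSeries.coeff_trunc]
  split
  · rfl
  · next h =>
    symm
    apply tail_vanish (n+1) (Polynomial.X^k * (Polynomial.X + Polynomial.C 1)^(n-k)) _ 0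
    · calc (Polynomial.X^k * (Polynomial.X + Polynomial.C 1)^(n-k) : Polynomial ℝ).natDegree
          ≤ (Polynomial.X^k : Polynomial ℝ).natDegree
            + ((Polynomial.X + Polynomial.C 1 : Polynomial ℝ)^(n-k)).natDegree :=
            Polynomial.natDegree_mul_le
      _ ≤ k + (n-k) * 1 := by
            gcongr
            · simp
            · exact le_trans (Polynomial.natDegree_pow_le)
                (by gcongr; exact le_of_eq (Polynomial.natDegree_X_add_C 1))
      _ < n + 1 := by omega
    · intro m _
      show fR n k m = _
      simp only [fR, Polynomial.eval_mul, Polynomial.eval_pow, Polynomial.eval_X,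
        Polynomial.eval_add, Polynomial.eval_C]
      ring
    · omega


lemma sum_all (n : ℕ) (m : ℕ) :
    ∑ i ∈ range n, fR (n-1) i m = (1+(m:ℝ))^n - (m:ℝ)^n := by
  have := geom_sum₂_mul (m:ℝ) (1+(m:ℝ)) n
  have h2 : ∑ i ∈ range n, fR (n-1) i m = ∑ i ∈ range n, (m:ℝ)^i * (1+(m:ℝ))^(n-1-i) := by
    apply Finset.sum_congr rfl
    intro i hi
    rw [Finset.mem_range] at hi
    simp only [fR]
  rw [h2]
  linear_combination (-1:ℝ) * this

lemma sum_lo (n k m : ℕ) (hk : k ≤ n) (hn : 1 ≤ n) :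
    ∑ i ∈ range k, fR (n-1) i m = (1+(m:ℝ))^(n-k) * ((1+(m:ℝ))^k - (m:ℝ)^k) := by
  have h2 : ∑ i ∈ range k, fR (n-1) i m
      = ∑ i ∈ range k, ((m:ℝ)^i * (1+(m:ℝ))^(k-1-i)) * (1+(m:ℝ))^(n-k) := by
    apply Finset.sum_congr rfl
    intro i hi
    rw [Finset.mem_range] at hi
    simp only [fR]
    rw [mul_assoc, ← pow_add]
    congr 2
    omega
  rw [h2, ← Finset.sum_mul]
  have := geom_sum₂_mul (m:ℝ) (1+(m:ℝ)) k
  linear_combination (-(1+(m:ℝ))^(n-k)) * this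

lemma sum_hi (n k m : ℕ) (hk : k ≤ n) (hn : 1 ≤ n) :
    ∑ i ∈ Ico k n, fR (n-1) i m = (m:ℝ)^k * ((1+(m:ℝ))^(n-k) - (m:ℝ)^(n-k)) := by
  rw [Finset.sum_Ico_eq_sum_range]
  have h2 : ∑ i ∈ range (n-k), fR (n-1) (k+i) m
      = ∑ i ∈ range (n-k), (m:ℝ)^k * ((m:ℝ)^i * (1+(m:ℝ))^((n-k)-1-i)) := by
    apply Finset.sum_congr rfl
    intro i hi
    rw [Finset.mem_range] at hi
    simp only [fR]
    rw [← mul_assoc, ← pow_add]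
    congr 2
    omega
  rw [h2, ← Finset.mul_sum]
  have := geom_sum₂_mul (m:ℝ) (1+(m:ℝ)) (n-k)
  linear_combination (-((m:ℝ)^k)) * this


lemma tele (N n : ℕ) (hn : 1 ≤ n) (b : ℕ) (hb1 : 1 ≤ b) (hbN : b ≤ N + 1) :
    ∑ s ∈ Ico 1 b, ((1+((N-s:ℕ):ℝ))^n - ((N-s:ℕ):ℝ)^n)
      = (N:ℝ)^n - ((N+1-b:ℕ):ℝ)^n := by
  rw [Finset.sum_Ico_eq_sum_range]
  have key : ∀ t ∈ range (b-1),
      (1+((N-(1+t):ℕ):ℝ))^n - ((N-(1+t):ℕ):ℝ)^n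
        = (fun i => ((N-i:ℕ):ℝ)^n) t - (fun i => ((N-i:ℕ):ℝ)^n) (t+1) := by
    intro t ht
    rw [Finset.mem_range] at ht
    simp only
    have e1 : (N-t:ℕ) = (N-(1+t):ℕ) + 1 := by omega
    have e2 : (N-(t+1):ℕ) = (N-(1+t):ℕ) := by omega
    rw [e1, e2]
    push_cast
    ring
  rw [Finset.sum_congr rfl key, Finset.sum_range_sub' (fun i => ((N-i:ℕ):ℝ)^n) (b-1)]
  have e0 : (N-0:ℕ) = N := by omega
  have e3 : (N-(b-1):ℕ) = (N+1-b:ℕ) := by omega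
  rw [e0, e3]

lemma key_coeff (n r k : ℕ) (hn : 1 ≤ n) (hr : 1 ≤ r) (hk : k ≤ n) (N : ℕ) :
    fR n k N - (if r ≤ N then fR n k (N-r) else 0)
      = (∑ s ∈ Ico 1 r, (if s ≤ N then ((1+((N-s:ℕ):ℝ))^n - ((N-s:ℕ):ℝ)^n) else 0))
        + (if r ≤ N then (1+((N-r:ℕ):ℝ))^(n-k) * ((1+((N-r:ℕ):ℝ))^k - ((N-r:ℕ):ℝ)^k) else 0)
        + (N:ℝ)^k * ((1+(N:ℝ))^(n-k) - (N:ℝ)^(n-k)) := by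
  have hNk : ((N:ℝ))^k * ((N:ℝ))^(n-k) = (N:ℝ)^n := by rw [← pow_add]; congr 1; omega
  by_cases hrN : r ≤ N
  · rw [if_pos hrN, if_pos hrN]
    have hsum : ∀ s ∈ Ico 1 r,
        (if s ≤ N then ((1+((N-s:ℕ):ℝ))^n - ((N-s:ℕ):ℝ)^n) else 0)
          = ((1+((N-s:ℕ):ℝ))^n - ((N-s:ℕ):ℝ)^n) := by
      intro s hs
      rw [Finset.mem_Ico] at hs
      rw [if_pos (by omega)]
    rw [Finset.sum_congr rfl hsum, tele N n hn r hr (by omega)]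
    have e1 : ((N+1-r:ℕ):ℝ) = ((N-r:ℕ):ℝ) + 1 := by
      have : (N+1-r:ℕ) = (N-r:ℕ)+1 := by omega
      rw [this]; push_cast; ring
    rw [e1]
    set b : ℝ := ((N-r:ℕ):ℝ)
    have hb : (b+1)^(n-k) * (b+1)^k = (b+1)^n := by rw [← pow_add]; congr 1; omega
    simp only [fR]
    linear_combination hNk - hb
  · rw [if_neg hrN, if_neg hrN]
    have hsplit := Finset.sum_Ico_consecutive
      (fun s => (if s ≤ N then ((1+((N-s:ℕ):ℝ))^n - ((N-s:ℕ):ℝ)^n) else 0))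
      (show 1 ≤ N+1 by omega) (show N+1 ≤ r by omega)
    rw [← hsplit]
    have h1 : ∀ s ∈ Ico 1 (N+1),
        (if s ≤ N then ((1+((N-s:ℕ):ℝ))^n - ((N-s:ℕ):ℝ)^n) else 0)
          = ((1+((N-s:ℕ):ℝ))^n - ((N-s:ℕ):ℝ)^n) := by
      intro s hs; rw [Finset.mem_Ico] at hs; rw [if_pos (by omega)]
    have h2 : ∀ s ∈ Ico (N+1) r,
        (if s ≤ N then ((1+((N-s:ℕ):ℝ))^n - ((N-s:ℕ):ℝ)^n) else 0) = 0 := by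
      intro s hs; rw [Finset.mem_Ico] at hs; rw [if_neg (by omega)]
    rw [Finset.sum_congr rfl h1, Finset.sum_congr rfl h2, Finset.sum_const_zero, add_zero,
      tele N n hn (N+1) (by omega) le_rfl]
    have e0 : (N+1-(N+1):ℕ) = 0 := by omega
    rw [e0]
    simp only [fR, Nat.cast_zero]
    rw [zero_pow (by omega)]
    linear_combination hNk


lemma key_series (n r k : ℕ) (hn : 1 ≤ n) (hr : 1 ≤ r) (hk : k ≤ n) :
    (1 - PowerSeries.X^r) * F n k
      = (∑ s ∈ Ico 1 r, PowerSeries.X^s) * (∑ i ∈ range n, F (n-1) i)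
        + PowerSeries.X^r * (∑ i ∈ range k, F (n-1) i)
        + (∑ i ∈ Ico k n, F (n-1) i) := by
  ext N
  rw [sub_mul, one_mul, map_sub, map_add, map_add, Finset.sum_mul, map_sum, map_sum,
    St15.coeff_X_pow_mul']
  simp only [St15.coeff_X_pow_mul']
  have cA : ∀ M : ℕ, PowerSeries.coeff M (∑ i ∈ range n, F (n-1) i)
      = (1+(M:ℝ))^n - (M:ℝ)^n := by
    intro M
    rw [map_sum]
    simp only [F, PowerSeries.coeff_mk]
    exact sum_all n M
  have cB : ∀ M : ℕ, PowerSeries.coeff M (∑ i ∈ range k, F (n-1) i)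
      = (1+(M:ℝ))^(n-k) * ((1+(M:ℝ))^k - (M:ℝ)^k) := by
    intro M
    rw [map_sum]
    simp only [F, PowerSeries.coeff_mk]
    exact sum_lo n k M hk hn
  have cC : ∑ x ∈ Ico k n, PowerSeries.coeff N (F (n-1) x)
      = (N:ℝ)^k * ((1+(N:ℝ))^(n-k) - (N:ℝ)^(n-k)) := by
    simp only [F, PowerSeries.coeff_mk]
    exact sum_hi n k N hk hn
  rw [cC]
  simp only [cA, cB]
  simp only [F, PowerSeries.coeff_mk]
  exact key_coeff n r k hn hr hk N


def Qp (r n k : ℕ) : Polynomial ℝ := (∑ i ∈ range r, Polynomial.X^i)^n * pnk n k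

lemma geo_mul (r : ℕ) :
    (∑ i ∈ range r, (PowerSeries.X : PowerSeries ℝ)^i) * (1 - PowerSeries.X)
      = 1 - PowerSeries.X^r := by
  have := geom_sum_mul (PowerSeries.X : PowerSeries ℝ) r
  linear_combination -this

lemma Qp_coe (r n k : ℕ) (hk : k ≤ n) :
    ((Qp r n k : Polynomial ℝ) : PowerSeries ℝ)
      = (1 - PowerSeries.X^r)^n * ((1 - PowerSeries.X) * F n k) := by
  have hsum : ((∑ i ∈ range r, (Polynomial.X : Polynomial ℝ)^i : Polynomial ℝ) : PowerSeries ℝ)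
      = ∑ i ∈ range r, (PowerSeries.X : PowerSeries ℝ)^i := by
    rw [← Polynomial.coeToPowerSeries.ringHom_apply, map_sum]
    simp
  rw [Qp, Polynomial.coe_mul, Polynomial.coe_pow, pnk_coe n k hk, hsum]
  calc (∑ i ∈ range r, (PowerSeries.X : PowerSeries ℝ)^i)^n
        * ((1 - PowerSeries.X)^(n+1) * F n k)
      = ((∑ i ∈ range r, (PowerSeries.X : PowerSeries ℝ)^i) * (1 - PowerSeries.X))^n
        * ((1 - PowerSeries.X) * F n k) := by
          rw [mul_pow, pow_succ]
          ring
    _ = _ := by rw [geo_mul]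

lemma main_series (n r k : ℕ) (hn : 1 ≤ n) (hr : 1 ≤ r) (hk : k ≤ n) :
    ((Qp r n k : Polynomial ℝ) : PowerSeries ℝ)
      = (∑ s ∈ Ico 1 r, PowerSeries.X^s) * (∑ i ∈ range n, ((Qp r (n-1) i : Polynomial ℝ) : PowerSeries ℝ))
        + PowerSeries.X^r * (∑ i ∈ range k, ((Qp r (n-1) i : Polynomial ℝ) : PowerSeries ℝ))
        + (∑ i ∈ Ico k n, ((Qp r (n-1) i : Polynomial ℝ) : PowerSeries ℝ)) := by
  obtain ⟨m, rfl⟩ : ∃ m, n = m + 1 := ⟨n - 1, by omega⟩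
  simp only [Nat.add_sub_cancel]
  have hQ' : ∀ S : Finset ℕ, (∀ i ∈ S, i ≤ m) →
      (∑ i ∈ S, ((Qp r m i : Polynomial ℝ) : PowerSeries ℝ))
        = (1 - PowerSeries.X^r)^m * ((1 - PowerSeries.X) * (∑ i ∈ S, F m i)) := by
    intro S hS
    rw [Finset.sum_congr rfl (fun i hi => Qp_coe r m i (hS i hi))]
    simp only [Finset.mul_sum]
  rw [Qp_coe r (m+1) k hk,
    hQ' (range (m+1)) (fun i hi => by rw [Finset.mem_range] at hi; omega),
    hQ' (range k) (fun i hi => by rw [Finset.mem_range] at hi; omega),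
    hQ' (Ico k (m+1)) (fun i hi => by rw [Finset.mem_Ico] at hi; omega)]
  have hkey := key_series (m+1) r k hn hr hk
  simp only [Nat.add_sub_cancel] at hkey
  linear_combination ((1 - PowerSeries.X^r)^m * (1 - PowerSeries.X)) * hkey

lemma main_coeff (n r k : ℕ) (hn : 1 ≤ n) (hr : 1 ≤ r) (hk : k ≤ n) (N : ℕ) :
    (Qp r n k).coeff N
      = (∑ s ∈ Ico 1 r, if s ≤ N then (∑ i ∈ range n, Qp r (n-1) i).coeff (N-s) else 0)
        + (if r ≤ N then (∑ i ∈ range k, Qp r (n-1) i).coeff (N-r) else 0)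
        + (∑ i ∈ Ico k n, Qp r (n-1) i).coeff N := by
  have h := congrArg (PowerSeries.coeff N) (main_series n r k hn hr hk)
  rw [Polynomial.coeff_coe] at h
  have hc : ∀ (S : Finset ℕ) (M : ℕ),
      PowerSeries.coeff M (∑ i ∈ S, ((Qp r (n-1) i : Polynomial ℝ) : PowerSeries ℝ))
        = (∑ i ∈ S, Qp r (n-1) i).coeff M := by
    intro S M
    rw [map_sum, Polynomial.finset_sum_coeff]
    exact Finset.sum_congr rfl fun i _ => Polynomial.coeff_coe _ _
  rw [h, map_add, map_add, Finset.sum_mul, map_sum]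
  simp only [St15.coeff_X_pow_mul', hc]


lemma coeff_prjnk (r j n k t : ℕ) :
    (prjnk r j n k).coeff t = if t ≤ n then (Qp r n k).coeff (r*t+j) else 0 := by
  rw [prjnk, Polynomial.finset_sum_coeff]
  simp only [Polynomial.coeff_C_mul, Polynomial.coeff_X_pow, mul_ite, mul_one, mul_zero]
  rw [Finset.sum_ite_eq (range (n+1)) t]
  simp only [Finset.mem_range, Nat.lt_succ_iff, Qp]

lemma Qp_deg (r n k : ℕ) : (Qp r n k).natDegree ≤ n*(r-1) + n := by
  have h1 : ((∑ i ∈ range r, (Polynomial.X : Polynomial ℝ)^i)^n).natDegree ≤ n*(r-1) := by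
    apply le_trans Polynomial.natDegree_pow_le
    have : (∑ i ∈ range r, (Polynomial.X : Polynomial ℝ)^i).natDegree ≤ r-1 := by
      apply Polynomial.natDegree_sum_le_of_forall_le
      intro i hi
      rw [Finset.mem_range] at hi
      rw [Polynomial.natDegree_X_pow]
      omega
    calc n * (∑ i ∈ range r, (Polynomial.X : Polynomial ℝ)^i).natDegree
        ≤ n * (r-1) := by gcongr
      _ = n * (r-1) := rfl
  have h2 : (pnk n k).natDegree ≤ n := by
    have := PowerSeries.natDegree_trunc_lt
      ((1 - PowerSeries.X : PowerSeries ℝ) ^ (n + 1) *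
        PowerSeries.mk fun m => (m : ℝ) ^ k * (1 + (m : ℝ)) ^ (n - k)) n
    rw [pnk]
    omega
  exact le_trans Polynomial.natDegree_mul_le (by omega)

lemma Qp_coeff_zero (r n k M : ℕ) (hr : 1 ≤ r) (hM : r*n < M) : (Qp r n k).coeff M = 0 := by
  apply Polynomial.coeff_eq_zero_of_natDegree_lt
  have hd := Qp_deg r n k
  have h3 : (r-1)+1 = r := by omega
  have h4 : n * ((r-1)+1) = n*(r-1) + n := Nat.mul_succ n (r-1)
  rw [h3] at h4
  have h5 : n*r = r*n := Nat.mul_comm n r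
  omega


end St15

/-- Proposition 5.6: the recurrence satisfied by the polynomials
`p^{⟨r,j⟩}_{n,k}`. -/
theorem statement15 (n r : ℕ) (hn : 1 ≤ n) (hr : 1 ≤ r) (k j : ℕ)
    (hk : k ≤ n) (hj : j < r) :
    prjnk r j n k =
      Polynomial.X *
          (∑ l ∈ Finset.Ico (j + 1) r, ∑ i ∈ Finset.range n, prjnk r l (n - 1) i) +
        Polynomial.X * (∑ i ∈ Finset.range k, prjnk r j (n - 1) i) +
        (∑ i ∈ Finset.Ico k n, prjnk r j (n - 1) i) +
        ∑ l ∈ Finset.range j, ∑ i ∈ Finset.range n, prjnk r l (n - 1) i := by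

  have hP : ∀ l i u, (prjnk r l (n-1) i).coeff u
      = if u ≤ n-1 then (St15.Qp r (n-1) i).coeff (r*u+l) else 0 := fun l i u =>
    St15.coeff_prjnk r l (n-1) i u
  have hQz : ∀ i M, r*(n-1) < M → (St15.Qp r (n-1) i).coeff M = 0 := fun i M hM =>
    St15.Qp_coeff_zero r (n-1) i M hr hM
  ext t
  rw [Polynomial.coeff_add, Polynomial.coeff_add, Polynomial.coeff_add]
  by_cases ht : t ≤ n
  · rw [St15.coeff_prjnk, if_pos ht, St15.main_coeff n r k hn hr hk (r*t+j)]
    -- split the A-sum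
    rw [← Finset.sum_Ico_consecutive
      (fun s => if s ≤ r*t+j then (∑ i ∈ range n, St15.Qp r (n-1) i).coeff (r*t+j-s) else 0)
      (show 1 ≤ j+1 by omega) (show j+1 ≤ r by omega)]
    have hPQ : ∀ l i, (prjnk r l (n-1) i).coeff t = (St15.Qp r (n-1) i).coeff (r*t+l) := by
      intro l i
      rw [hP]
      split
      · rfl
      · next h =>
        have htn : t = n := by omega
        have h1 : r * ((n-1)+1) = r*(n-1) + r := Nat.mul_succ r (n-1)
        have h2 : (n-1)+1 = n := by omega
        rw [h2] at h1
        rw [hQz i (r*t+l) (by rw [htn]; omega)]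
    -- part1 → T4
    have e1 : (∑ s ∈ Ico 1 (j+1),
        if s ≤ r*t+j then (∑ i ∈ range n, St15.Qp r (n-1) i).coeff (r*t+j-s) else 0)
        = (∑ l ∈ range j, ∑ i ∈ range n, prjnk r l (n-1) i).coeff t := by
      rw [Polynomial.finset_sum_coeff]
      apply Finset.sum_nbij' (fun s => j - s) (fun l => j - l)
      · intro a ha; rw [Finset.mem_Ico] at ha; rw [Finset.mem_range]; omega
      · intro a ha; rw [Finset.mem_range] at ha; rw [Finset.mem_Ico]; omega
      · intro a ha; rw [Finset.mem_Ico] at ha; omega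
      · intro a ha; rw [Finset.mem_range] at ha; omega
      · intro s hs
        rw [Finset.mem_Ico] at hs
        rw [if_pos (by omega), Polynomial.finset_sum_coeff]
        have : r*t+j-s = r*t+(j-s) := by omega
        rw [this, Polynomial.finset_sum_coeff]
        exact Finset.sum_congr rfl fun i _ => (hPQ (j-s) i).symm
    -- part2 → T1
    have e2 : (∑ s ∈ Ico (j+1) r,
        if s ≤ r*t+j then (∑ i ∈ range n, St15.Qp r (n-1) i).coeff (r*t+j-s) else 0)
        = (Polynomial.X * (∑ l ∈ Ico (j+1) r, ∑ i ∈ range n, prjnk r l (n-1) i)).coeff t := by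
      cases t with
      | zero =>
        rw [Polynomial.mul_coeff_zero, Polynomial.coeff_X_zero, zero_mul]
        apply Finset.sum_eq_zero
        intro s hs
        rw [Finset.mem_Ico] at hs
        rw [if_neg (by omega)]
      | succ u =>
        have hmu : r*(u+1) = r*u + r := Nat.mul_succ r u
        rw [Polynomial.coeff_X_mul, Polynomial.finset_sum_coeff]
        apply Finset.sum_nbij' (fun s => r + j - s) (fun l => r + j - l)
        · intro a ha; rw [Finset.mem_Ico] at ha ⊢; omega
        · intro a ha; rw [Finset.mem_Ico] at ha ⊢; omega
        · intro a ha; rw [Finset.mem_Ico] at ha; omega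
        · intro a ha; rw [Finset.mem_Ico] at ha; omega
        · intro s hs
          rw [Finset.mem_Ico] at hs
          rw [if_pos (by omega), Polynomial.finset_sum_coeff, Polynomial.finset_sum_coeff]
          have : r*(u+1)+j-s = r*u+(r+j-s) := by omega
          rw [this]
          apply Finset.sum_congr rfl
          intro i _
          rw [hP, if_pos (by omega)]
    -- B → T2
    have e3 : (if r ≤ r*t+j then (∑ i ∈ range k, St15.Qp r (n-1) i).coeff (r*t+j-r) else 0)
        = (Polynomial.X * (∑ i ∈ range k, prjnk r j (n-1) i)).coeff t := by
      cases t with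
      | zero =>
        rw [Polynomial.mul_coeff_zero, Polynomial.coeff_X_zero, zero_mul,
          if_neg (by omega)]
      | succ u =>
        have hmu : r*(u+1) = r*u + r := Nat.mul_succ r u
        rw [Polynomial.coeff_X_mul, if_pos (by omega), Polynomial.finset_sum_coeff,
          Polynomial.finset_sum_coeff]
        have : r*(u+1)+j-r = r*u+j := by omega
        rw [this]
        apply Finset.sum_congr rfl
        intro i _
        rw [hP, if_pos (by omega)]
    -- C → T3
    have e4 : (∑ i ∈ Ico k n, St15.Qp r (n-1) i).coeff (r*t+j)
        = (∑ i ∈ Ico k n, prjnk r j (n-1) i).coeff t := by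
      rw [Polynomial.finset_sum_coeff, Polynomial.finset_sum_coeff]
      exact Finset.sum_congr rfl fun i _ => (hPQ j i).symm
    rw [e1, e2, e3, e4]
    ring
  · rw [St15.coeff_prjnk, if_neg ht]
    obtain ⟨u, rfl⟩ : ∃ u, t = u + 1 := ⟨t - 1, by omega⟩
    rw [Polynomial.coeff_X_mul, Polynomial.coeff_X_mul]
    simp only [Polynomial.finset_sum_coeff, hP]
    have h1 : ¬ (u ≤ n - 1) := by omega
    have h2 : ¬ (u + 1 ≤ n - 1) := by omega
    simp [h1, h2]
end
end

section
/- For every n ≥ 1 and every positive integer r, p^{⟨r,0⟩}_{n,0}(x) − ∑_{k=0}^{n−1} p^{⟨r,0⟩}_{n−1,k}(x) = x·∑_{j=1}^{r−1} ∑_{k=0}^{n−1} p^{⟨r,j⟩}_{n−1,k}(x). -/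
open Polynomial PowerSeries Finset

noncomputable section

lemma fwdDiff_pow_eq_zero : ∀ (d N : ℕ), d < N →
    (fwdDiff (1:ℕ))^[N] (fun x : ℕ => (x:ℝ)^d) = fun _ => 0 := by
  intro d
  induction d using Nat.strong_induction_on with
  | _ d IH =>
    intro N hdN
    obtain ⟨N, rfl⟩ : ∃ M, N = M + 1 := ⟨N - 1, by omega⟩
    rw [Function.iterate_succ_apply]
    have hdiff : fwdDiff (1:ℕ) (fun x : ℕ => (x:ℝ)^d)
        = ∑ j ∈ Finset.range d, (d.choose j : ℝ) • (fun x : ℕ => (x:ℝ)^j) := by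
      funext x
      simp only [fwdDiff, Finset.sum_apply, Pi.smul_apply, smul_eq_mul]
      push_cast
      rw [add_pow]
      rw [Finset.sum_range_succ]
      simp [mul_comm]
    rw [hdiff, fwdDiff_iter_finset_sum]
    funext y
    simp only [Finset.sum_apply, Pi.zero_apply]
    apply Finset.sum_eq_zero
    intro j hj
    have hj' : j < d := Finset.mem_range.mp hj
    rw [fwdDiff_iter_const_smul, IH j hj' N (by omega)]
    simp

lemma alt_sum (n : ℕ) (hn : 1 ≤ n) :
    ∑ j ∈ Finset.range (n+1), (-1:ℝ)^(n-j) * ((n+1).choose (j+1)) * ((j:ℝ)+1)^n = 0 := by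
  have h := fwdDiff_iter_eq_sum_shift (1:ℕ) (fun x : ℕ => (x:ℝ)^n) (n+1) 0
  rw [fwdDiff_pow_eq_zero n (n+1) (by omega)] at h
  rw [Finset.sum_range_succ'] at h
  simp only [zero_add, smul_eq_mul, Nat.smul_one_eq_cast] at h
  -- h : 0 = ∑ i in range (n+1), ((-1)^(n+1-(i+1)) * choose (i+1)) • (↑(i+1))^n + (...)• 0^n
  refine Eq.trans ?_ h.symm
  norm_num [zero_pow (show n ≠ 0 by omega), zsmul_eq_mul]
  apply Finset.sum_congr rfl
  intro x hx
  have : n + 1 - (x + 1) = n - x := by omega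
  rw [this]

lemma coeff_one_sub_X_pow (N i : ℕ) :
    PowerSeries.coeff (R := ℝ) i ((1 - PowerSeries.X)^N) = (-1:ℝ)^i * (N.choose i) := by
  have : (1 - PowerSeries.X : PowerSeries ℝ)^N = ∑ k ∈ Finset.range (N+1),
      (-PowerSeries.X)^k * 1^(N-k) * (N.choose k : PowerSeries ℝ) := by
    rw [← add_pow, neg_add_eq_sub]
  rw [this, map_sum]
  have hterm : ∀ k ∈ Finset.range (N+1),
      PowerSeries.coeff (R := ℝ) i ((-PowerSeries.X)^k * 1^(N-k) * (N.choose k : PowerSeries ℝ))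
      = if k = i then (-1:ℝ)^i * (N.choose i) else 0 := by
    intro k hk
    have h1 : (-PowerSeries.X : PowerSeries ℝ)^k * 1^(N-k) * (N.choose k : PowerSeries ℝ)
        = PowerSeries.C (R := ℝ) ((-1:ℝ)^k * (N.choose k)) * PowerSeries.X^k := by
      rw [map_mul, map_pow, map_natCast, map_neg, map_one]
      ring
    rw [h1, PowerSeries.coeff_C_mul, PowerSeries.coeff_X_pow]
    by_cases h : k = i
    · subst h; simp
    · simp [h, Ne.symm h]
  rw [Finset.sum_congr rfl hterm, Finset.sum_ite_eq' (Finset.range (N+1)) i]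
  split_ifs with h
  · rfl
  · have : N < i := by simpa using h
    rw [Nat.choose_eq_zero_of_lt this]
    simp

lemma coeff_top_zero (n : ℕ) (hn : 1 ≤ n) :
    PowerSeries.coeff (R := ℝ) n ((1 - PowerSeries.X)^(n+1)
      * PowerSeries.mk fun l => (1 + (l:ℝ))^n) = 0 := by
  rw [PowerSeries.coeff_mul, Finset.Nat.sum_antidiagonal_eq_sum_range_succ_mk]
  simp only [coeff_one_sub_X_pow, PowerSeries.coeff_mk]
  rw [← Finset.sum_range_reflect]
  rw [← alt_sum n hn]
  apply Finset.sum_congr rfl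
  intro j hj
  have hj' : j ≤ n := by simpa using Nat.lt_succ_iff.mp (Finset.mem_range.mp hj)
  have e1 : n + 1 - 1 - j = n - j := by omega
  have e2 : n - (n - j) = j := by omega
  have e3 : (n+1).choose (n - j) = (n+1).choose (j+1) := by
    have : n - j = (n+1) - (j+1) := by omega
    rw [this, Nat.choose_symm (by omega)]
  rw [e1, e2, e3]
  ring

lemma trunc_finset_sum {α : Type*} (s : Finset α) (N : ℕ) (φ : α → PowerSeries ℝ) :
    PowerSeries.trunc N (∑ a ∈ s, φ a) = ∑ a ∈ s, PowerSeries.trunc N (φ a) := by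
  ext d
  rw [PowerSeries.coeff_trunc, map_sum, Polynomial.finset_sum_coeff]
  split_ifs with h
  · apply Finset.sum_congr rfl
    intro a _
    rw [PowerSeries.coeff_trunc, if_pos h]
  · symm
    apply Finset.sum_eq_zero
    intro a _
    rw [PowerSeries.coeff_trunc, if_neg h]

lemma mk_finset_sum {α : Type*} (s : Finset α) (f : α → ℕ → ℝ) :
    (PowerSeries.mk fun l => ∑ a ∈ s, f a l) = ∑ a ∈ s, PowerSeries.mk (f a) := by
  ext l
  rw [PowerSeries.coeff_mk, map_sum]
  simp [PowerSeries.coeff_mk]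

lemma sum_pnk (m : ℕ) : ∑ k ∈ Finset.range (m+1), pnk m k = pnk (m+1) 0 := by
  have hg : ∀ x : ℝ, ∑ k ∈ Finset.range (m+1), x^k * (1+x)^(m-k)
      = (1+x)^(m+1) - x^(m+1) := by
    intro x
    have h := geom_sum₂_mul x (1+x) (m+1)
    simp only [Nat.add_sub_cancel] at h
    have h2 : x - (1 + x) = -1 := by ring
    rw [h2, mul_neg_one, neg_eq_iff_eq_neg] at h
    rw [h]; ring
  have hfac : (PowerSeries.mk fun l => ∑ k ∈ Finset.range (m+1), (l:ℝ)^k * (1+(l:ℝ))^(m-k))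
      = (1 - PowerSeries.X) * PowerSeries.mk (fun l => (1+(l:ℝ))^(m+1)) := by
    ext l
    rw [sub_mul, one_mul, map_sub]
    simp only [PowerSeries.coeff_mk]
    rw [hg]
    cases l with
    | zero => simp [PowerSeries.coeff_zero_X_mul]
    | succ s =>
      rw [PowerSeries.coeff_succ_X_mul]
      simp only [PowerSeries.coeff_mk]
      push_cast
      ring
  have hser : ∑ k ∈ Finset.range (m+1), pnk m k
      = PowerSeries.trunc (m+1) ((1 - PowerSeries.X)^(m+2)
          * PowerSeries.mk (fun l => (1+(l:ℝ))^(m+1))) := by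
    unfold pnk
    rw [← trunc_finset_sum, ← Finset.mul_sum, ← mk_finset_sum, hfac,
      ← mul_assoc, ← pow_succ]
  have hser2 : pnk (m+1) 0
      = PowerSeries.trunc (m+2) ((1 - PowerSeries.X)^(m+2)
          * PowerSeries.mk (fun l => (1+(l:ℝ))^(m+1))) := by
    unfold pnk
    congr 1
    congr 1
    ext l
    simp
  rw [hser, hser2]
  ext d
  rw [PowerSeries.coeff_trunc, PowerSeries.coeff_trunc]
  by_cases h1 : d < m + 1
  · rw [if_pos h1, if_pos (by omega)]
  · rw [if_neg h1]
    by_cases h2 : d < m + 2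
    · have : d = m + 1 := by omega
      subst this
      rw [if_pos h2, coeff_top_zero (m+1) (by omega)]
    · rw [if_neg h2]

lemma sumC_coeff (N d : ℕ) (a : ℕ → ℝ) :
    (∑ t ∈ Finset.range N, Polynomial.C (a t) * Polynomial.X^t).coeff d
      = if d < N then a d else 0 := by
  simp only [Polynomial.finset_sum_coeff, Polynomial.coeff_C_mul, Polynomial.coeff_X_pow,
    mul_ite, mul_one, mul_zero]
  rw [Finset.sum_ite_eq (Finset.range N) d a]
  simp [Finset.mem_range]

lemma conv_coeff (r : ℕ) (hr : 1 ≤ r) (B : Polynomial ℝ) (s : ℕ) :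
    ((∑ i ∈ Finset.range r, (Polynomial.X : Polynomial ℝ)^i) * B).coeff (r*(s+1))
      = B.coeff (r*(s+1)) + ∑ j ∈ Finset.Ico 1 r, B.coeff (r*s+j) := by
  have hrs : r*(s+1) = r*s + r := by ring
  rw [Finset.sum_mul, Polynomial.finset_sum_coeff]
  have hterm : ∀ i ∈ Finset.range r,
      ((Polynomial.X : Polynomial ℝ)^i * B).coeff (r*(s+1)) = B.coeff (r*s + (r - i)) := by
    intro i hi
    have hi' : i < r := Finset.mem_range.mp hi
    rw [Polynomial.coeff_X_pow_mul', if_pos (by omega : i ≤ r*(s+1))]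
    congr 1
    omega
  rw [Finset.sum_congr rfl hterm, Finset.range_eq_Ico, Finset.sum_eq_sum_Ico_succ_bot hr]
  rw [Nat.sub_zero, ← hrs]
  congr 1
  apply Finset.sum_nbij' (fun i => r - i) (fun j => r - j)
  · intro i hi
    simp only [Finset.mem_Ico] at hi ⊢
    omega
  · intro j hj
    simp only [Finset.mem_Ico] at hj ⊢
    omega
  · intro i hi
    simp only [Finset.mem_Ico] at hi
    omega
  · intro j hj
    simp only [Finset.mem_Ico] at hj
    omega
  · intro i _
    rfl

lemma coeff_zero_A (r : ℕ) (hr : 1 ≤ r) :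
    (∑ i ∈ Finset.range r, (Polynomial.X : Polynomial ℝ)^i).coeff 0 = 1 := by
  rw [Polynomial.finset_sum_coeff]
  simp only [Polynomial.coeff_X_pow]
  rw [Finset.sum_ite_eq (Finset.range r) 0 (fun _ => (1:ℝ))]
  simp [Finset.mem_range]
  omega

lemma main_aux (r m : ℕ) (hr : 1 ≤ r) (B : Polynomial ℝ) (hdeg : B.natDegree < r*(m+1)) :
    (∑ t ∈ Finset.range (m+2), Polynomial.C
        (((∑ i ∈ Finset.range r, (Polynomial.X : Polynomial ℝ)^i) * B).coeff (r*t+0))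
        * Polynomial.X^t)
      - (∑ t ∈ Finset.range (m+1), Polynomial.C (B.coeff (r*t+0)) * Polynomial.X^t)
    = Polynomial.X * ∑ j ∈ Finset.Ico 1 r,
        ∑ t ∈ Finset.range (m+1), Polynomial.C (B.coeff (r*t+j)) * Polynomial.X^t := by
  ext d
  rw [Polynomial.coeff_sub, sumC_coeff, sumC_coeff]
  cases d with
  | zero =>
    rw [if_pos (by omega : 0 < m+2), if_pos (by omega : 0 < m+1)]
    have hRHS : (Polynomial.X * ∑ j ∈ Finset.Ico 1 r,
        ∑ t ∈ Finset.range (m+1), Polynomial.C (B.coeff (r*t+j)) * Polynomial.X^t).coeff 0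
        = 0 := by
      rw [Polynomial.mul_coeff_zero, Polynomial.coeff_X_zero, zero_mul]
    rw [hRHS]
    simp only [Nat.mul_zero, Nat.add_zero, Nat.zero_add]
    rw [Polynomial.mul_coeff_zero, coeff_zero_A r hr, one_mul, sub_self]
  | succ e =>
    rw [Polynomial.coeff_X_mul, Polynomial.finset_sum_coeff]
    simp only [sumC_coeff]
    by_cases he : e < m+1
    · rw [Finset.sum_congr rfl (fun j _ => if_pos he), if_pos (by omega : e+1 < m+2)]
      simp only [Nat.add_zero]
      rw [conv_coeff r hr B e]
      by_cases he2 : e + 1 < m + 1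
      · rw [if_pos he2]; ring
      · rw [if_neg he2]
        have h31 : e + 1 = m + 1 := by omega
        have hz : B.coeff (r*(e+1)) = 0 := by
          apply Polynomial.coeff_eq_zero_of_natDegree_lt
          rw [h31]
          exact hdeg
        rw [hz]
        ring
    · rw [Finset.sum_congr rfl (fun j _ => if_neg he), if_neg (by omega : ¬ e+1 < m+2),
        if_neg (by omega : ¬ e+1 < m+1), Finset.sum_const_zero]
      ring

/-- Proposition 5.5, Equation (5.4):
`p^{⟨r,0⟩}_{n,0} − ∑_{k=0}^{n−1} p^{⟨r,0⟩}_{n−1,k} = x·∑_{j=1}^{r−1} ∑_{k=0}^{n−1} p^{⟨r,j⟩}_{n−1,k}`. -/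
theorem statement16 (n r : ℕ) (hn : 1 ≤ n) (hr : 1 ≤ r) :
    prjnk r 0 n 0 - ∑ k ∈ Finset.range n, prjnk r 0 (n - 1) k =
      Polynomial.X * ∑ j ∈ Finset.Ico 1 r, ∑ k ∈ Finset.range n, prjnk r j (n - 1) k := by
  obtain ⟨m, rfl⟩ : ∃ m, n = m + 1 := ⟨n - 1, by omega⟩
  simp only [Nat.add_sub_cancel]
  have hQ := sum_pnk m
  have h1 : prjnk r 0 (m+1) 0 = ∑ t ∈ Finset.range (m+2), Polynomial.C
      (((∑ i ∈ Finset.range r, (Polynomial.X : Polynomial ℝ)^i)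
        * ((∑ i ∈ Finset.range r, (Polynomial.X : Polynomial ℝ)^i)^m * pnk (m+1) 0)).coeff (r*t+0))
      * Polynomial.X^t := by
    unfold prjnk
    apply Finset.sum_congr rfl
    intro t _
    congr 3
    rw [← mul_assoc, ← pow_succ']
  have h2 : ∀ j, ∑ k ∈ Finset.range (m+1), prjnk r j m k
      = ∑ t ∈ Finset.range (m+1), Polynomial.C
          ((((∑ i ∈ Finset.range r, (Polynomial.X : Polynomial ℝ)^i)^m
            * pnk (m+1) 0)).coeff (r*t+j)) * Polynomial.X^t := by
    intro j
    unfold prjnk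
    rw [Finset.sum_comm]
    apply Finset.sum_congr rfl
    intro t _
    rw [← Finset.sum_mul, ← map_sum]
    congr 2
    rw [← Polynomial.finset_sum_coeff, ← Finset.mul_sum, hQ]
  rw [h1, h2 0, Finset.sum_congr rfl (fun j _ => h2 j)]
  apply main_aux r m hr
  -- degree bound
  have hA : (∑ i ∈ Finset.range r, (Polynomial.X : Polynomial ℝ)^i).natDegree ≤ r - 1 := by
    apply Polynomial.natDegree_sum_le_of_forall_le
    intro i hi
    rw [Polynomial.natDegree_X_pow]
    have := Finset.mem_range.mp hi
    omega
  have hApow : ((∑ i ∈ Finset.range r, (Polynomial.X : Polynomial ℝ)^i)^m).natDegree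
      ≤ m * (r-1) := by
    apply le_trans (Polynomial.natDegree_pow_le)
    exact Nat.mul_le_mul_left m hA
  have hP : (pnk (m+1) 0).natDegree ≤ m := by
    rw [← hQ]
    apply Polynomial.natDegree_sum_le_of_forall_le
    intro k _
    unfold pnk
    exact Nat.lt_succ_iff.mp (PowerSeries.natDegree_trunc_lt _ m)
  apply lt_of_le_of_lt (Polynomial.natDegree_mul_le)
  have : m * (r-1) + m = m * r := by
    cases r with
    | zero => omega
    | succ r' => simp [Nat.mul_succ]
  have h2' : m * (r-1) + m < r * (m+1) := by
    rw [this]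
    calc m * r = r * m := Nat.mul_comm m r
    _ < r * m + r := by omega
    _ = r * (m+1) := by ring
  omega
end
end
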